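/- arXiv:1104.4419 — 6 statements merged into one kernel-verified Lean document; each statement's English description precedes it below -/
import Mathlib

section
/- For every integer n ≥ 1, the quantity σ(n) defined by the equation e^n/2 = Σ_{k=0}^{n-1} n^k/k! + (1/3 + σ(n))·(n^n/n!) satisfies: σ(n) > 0, σ(n+1) < σ(n) for all n ≥ 1, and σ(n) → 0 as n → ∞. (Equivalently, σ(n) = (n!/n^n)·(e^n/2 − Σ_{k=0}^{n-1} n^k/k!) − 1/3 tends monotonically decreasing to zero.) -/
/-- Szegő's function `σ(n)`, defined by
`e^n/2 = Σ_{k=0}^{n-1} n^k/k! + (1/3 + σ(n)) · n^n/n!`, i.e.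
`σ(n) = (n!/n^n) · (e^n/2 − Σ_{k=0}^{n-1} n^k/k!) − 1/3`. -/
noncomputable def sigmaSzego (n : ℕ) : ℝ :=
  ((n.factorial : ℝ) / (n : ℝ) ^ n) *
      (Real.exp n / 2 - ∑ k ∈ Finset.range n, (n : ℝ) ^ k / (k.factorial : ℝ)) - 1 / 3

open Real Set

namespace Szego



/-- `x(w) = (e^w - 1 - w)/(e^w - 1)` -/
noncomputable def xw (w : ℝ) : ℝ := (exp w - 1 - w) / (exp w - 1)
/-- `y(w) = (w e^w - e^w + 1)/(e^w - 1)` -/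
noncomputable def yw (w : ℝ) : ℝ := (w * exp w - exp w + 1) / (exp w - 1)
/-- `S(w) = (1 - x(w)) e^{x(w)}`, strictly decreasing from 1 to 0 on `(0,∞)`. -/
noncomputable def Sw (w : ℝ) : ℝ := (1 - xw w) * exp (xw w)
/-- `Ψ(w) = 1/(2x) - 1/(2y) - 1/3`. -/
noncomputable def Psi (w : ℝ) : ℝ := 1 / (2 * xw w) - 1 / (2 * yw w) - 1 / 3

lemma expm1_pos {w : ℝ} (hw : 0 < w) : 0 < exp w - 1 := by
  have h := Real.exp_lt_exp.2 hw; rw [Real.exp_zero] at h; linarith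

lemma D1_pos {w : ℝ} (hw : 0 < w) : 0 < exp w - 1 - w := by
  have := Real.add_one_lt_exp (ne_of_gt hw); linarith

lemma D2_pos {w : ℝ} (hw : 0 < w) : 0 < w * exp w - exp w + 1 := by
  have h := Real.add_one_lt_exp (x := -w) (by linarith)
  have h2 : (1 - w) * exp w < 1 := by
    have hp : 0 < exp w := exp_pos w
    have : (-w + 1) * exp w < exp (-w) * exp w := by nlinarith [exp_pos (-w)]
    rw [← Real.exp_add, neg_add_cancel, Real.exp_zero] at this
    linarith [this, mul_comm (-w+1) (exp w)]
  nlinarith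

lemma one_sub_mul_exp_lt_one {x : ℝ} (hx : 0 < x) : (1 - x) * exp x < 1 := by
  have h := Real.add_one_lt_exp (x := -x) (by linarith)
  have hp : 0 < exp x := exp_pos x
  have : (-x + 1) * exp x < exp (-x) * exp x := by nlinarith [exp_pos (-x)]
  rw [← Real.exp_add, neg_add_cancel, Real.exp_zero] at this
  nlinarith

lemma xw_pos {w : ℝ} (hw : 0 < w) : 0 < xw w :=
  div_pos (D1_pos hw) (expm1_pos hw)

lemma xw_lt_one {w : ℝ} (hw : 0 < w) : xw w < 1 := by
  rw [xw, div_lt_one (expm1_pos hw)]; linarith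

lemma one_sub_xw {w : ℝ} (hw : 0 < w) : 1 - xw w = w / (exp w - 1) := by
  have h := expm1_pos hw
  rw [xw, eq_div_iff h.ne', sub_mul, div_mul_cancel₀ _ h.ne']; ring

lemma yw_pos {w : ℝ} (hw : 0 < w) : 0 < yw w :=
  div_pos (D2_pos hw) (expm1_pos hw)

lemma xw_add_yw {w : ℝ} (hw : 0 < w) : xw w + yw w = w := by
  have h := expm1_pos hw
  rw [xw, yw, ← add_div, div_eq_iff h.ne']; ring

/-- the key relation `(1+y) e^{-y} = (1-x) e^x`, i.e. `e^w (1-x) = 1+y`. -/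
lemma g_yw_eq_Sw {w : ℝ} (hw : 0 < w) : (1 + yw w) * exp (-(yw w)) = Sw w := by
  have h := expm1_pos hw
  have h1 : 1 + yw w = exp w * (1 - xw w) := by
    rw [one_sub_xw hw, yw]; field_simp; ring
  have h2 : exp (-(yw w)) = exp (xw w) * exp (-w) := by
    rw [← Real.exp_add]; congr 1; have := xw_add_yw hw; linarith
  rw [h1, h2, Sw]
  rw [show exp w * (1 - xw w) * (exp (xw w) * exp (-w)) =
    (1 - xw w) * exp (xw w) * (exp w * exp (-w)) by ring, ← Real.exp_add, add_neg_cancel,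
    Real.exp_zero, mul_one]

lemma Sw_pos {w : ℝ} (hw : 0 < w) : 0 < Sw w := by
  have := xw_lt_one hw
  exact mul_pos (by linarith) (exp_pos _)

lemma Sw_lt_one {w : ℝ} (hw : 0 < w) : Sw w < 1 :=
  one_sub_mul_exp_lt_one (xw_pos hw)




/-- Helper: if `f 0 = 0` and `f' > 0` on `(0,∞)` then `f > 0` on `(0,∞)`. -/
lemma pos_of_deriv_pos {f g : ℝ → ℝ} (hd : ∀ w, HasDerivAt f (g w) w) (h0 : f 0 = 0)
    (hp : ∀ w, 0 < w → 0 < g w) : ∀ w, 0 < w → 0 < f w := by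
  have hmono : StrictMonoOn f (Ici (0:ℝ)) := by
    apply strictMonoOn_of_deriv_pos (convex_Ici 0)
      (fun x _ => (hd x).continuousAt.continuousWithinAt)
    intro x hx
    rw [interior_Ici] at hx
    rw [(hd x).deriv]
    exact hp x hx
  intro w hw
  have := hmono (self_mem_Ici) (le_of_lt hw : (0:ℝ) ≤ w) hw
  rwa [h0] at this

/-- Helper: if `f 0 = 0` and `f' ≥ 0` on `(0,1)` then `f ≥ 0` on `[0,1]`. -/
lemma nonneg_of_deriv_nonneg {f g : ℝ → ℝ} (hd : ∀ w, HasDerivAt f (g w) w) (h0 : f 0 = 0)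
    (hp : ∀ w, w ∈ Ioo (0:ℝ) 1 → 0 ≤ g w) : ∀ w ∈ Icc (0:ℝ) 1, 0 ≤ f w := by
  have hmono : MonotoneOn f (Icc (0:ℝ) 1) := by
    apply monotoneOn_of_deriv_nonneg (convex_Icc 0 1)
      (fun x _ => (hd x).continuousAt.continuousWithinAt)
      (fun x _ => (hd x).differentiableAt.differentiableWithinAt)
    intro x hx
    rw [interior_Icc] at hx
    rw [(hd x).deriv]
    exact hp x hx
  intro w hw
  have := hmono (left_mem_Icc.2 zero_le_one) hw hw.1
  rwa [h0] at this

noncomputable def F0 (w:ℝ) : ℝ := exp (4*w/3) - (1+w)*exp (w/3) + (1-w)*exp w - 1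
noncomputable def F1 (w:ℝ) : ℝ := (4/3)*exp (4*w/3) - ((4+w)/3)*exp (w/3) - w*exp w
noncomputable def F2 (w:ℝ) : ℝ := (16/9)*exp (4*w/3) - ((7+w)/9)*exp (w/3) - (1+w)*exp w
noncomputable def F3 (w:ℝ) : ℝ := (64/27)*exp (4*w/3) - ((10+w)/27)*exp (w/3) - (2+w)*exp w
noncomputable def F4 (w:ℝ) : ℝ := (256/81)*exp (4*w/3) - ((13+w)/81)*exp (w/3) - (3+w)*exp w
noncomputable def F5 (w:ℝ) : ℝ := (1024/243)*exp (4*w/3) - ((16+w)/243)*exp (w/3) - (4+w)*exp w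

lemma hasDerivAt_exp43 (w : ℝ) : HasDerivAt (fun w : ℝ => exp (4*w/3)) ((4/3)*exp (4*w/3)) w := by
  have h : HasDerivAt (fun w : ℝ => 4*w/3) (4/3) w := by
    simpa using ((hasDerivAt_id w).const_mul (4:ℝ)).div_const 3
  simpa [mul_comm] using h.exp

lemma hasDerivAt_exp13 (w : ℝ) : HasDerivAt (fun w : ℝ => exp (w/3)) ((1/3)*exp (w/3)) w := by
  have h : HasDerivAt (fun w : ℝ => w/3) (1/3) w := by
    simpa using (hasDerivAt_id w).div_const 3
  simpa [mul_comm] using h.exp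

lemma hasDerivAt_F0 (w : ℝ) : HasDerivAt F0 (F1 w) w := by
  have h1 := hasDerivAt_exp43 w
  have h2 : HasDerivAt (fun w:ℝ => (1+w)*exp (w/3)) (1*exp (w/3) + (1+w)*((1/3)*exp (w/3))) w :=
    ((hasDerivAt_id w).const_add 1).mul (hasDerivAt_exp13 w)
  have h3 : HasDerivAt (fun w:ℝ => (1-w)*exp w) ((0-1)*exp w + (1-w)*exp w) w :=
    ((hasDerivAt_const w (1:ℝ)).sub (hasDerivAt_id w)).mul (Real.hasDerivAt_exp w)
  have := ((h1.sub h2).add h3).sub_const 1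
  refine this.congr_deriv (Eq.symm ?_)
  unfold F1; ring

lemma hasDerivAt_F1 (w : ℝ) : HasDerivAt F1 (F2 w) w := by
  have h1 := (hasDerivAt_exp43 w).const_mul (4/3:ℝ)
  have h2 : HasDerivAt (fun w:ℝ => ((4+w)/3)*exp (w/3))
      ((1/3)*exp (w/3) + ((4+w)/3)*((1/3)*exp (w/3))) w :=
    (((hasDerivAt_id w).const_add 4).div_const 3).mul (hasDerivAt_exp13 w)
  have h3 : HasDerivAt (fun w:ℝ => w*exp w) (1*exp w + w*exp w) w :=
    (hasDerivAt_id w).mul (Real.hasDerivAt_exp w)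
  have := (h1.sub h2).sub h3
  refine this.congr_deriv (Eq.symm ?_)
  unfold F2; ring

lemma hasDerivAt_F2 (w : ℝ) : HasDerivAt F2 (F3 w) w := by
  have h1 := (hasDerivAt_exp43 w).const_mul (16/9:ℝ)
  have h2 : HasDerivAt (fun w:ℝ => ((7+w)/9)*exp (w/3))
      ((1/9)*exp (w/3) + ((7+w)/9)*((1/3)*exp (w/3))) w := by
    have := (((hasDerivAt_id w).const_add 7).div_const 9).mul (hasDerivAt_exp13 w)
    refine this.congr_deriv (Eq.symm ?_); simp only [id_eq]
  have h3 : HasDerivAt (fun w:ℝ => (1+w)*exp w) (1*exp w + (1+w)*exp w) w :=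
    ((hasDerivAt_id w).const_add 1).mul (Real.hasDerivAt_exp w)
  have := (h1.sub h2).sub h3
  refine this.congr_deriv (Eq.symm ?_)
  unfold F3; ring

lemma hasDerivAt_F3 (w : ℝ) : HasDerivAt F3 (F4 w) w := by
  have h1 := (hasDerivAt_exp43 w).const_mul (64/27:ℝ)
  have h2 : HasDerivAt (fun w:ℝ => ((10+w)/27)*exp (w/3))
      ((1/27)*exp (w/3) + ((10+w)/27)*((1/3)*exp (w/3))) w := by
    have := (((hasDerivAt_id w).const_add 10).div_const 27).mul (hasDerivAt_exp13 w)
    refine this.congr_deriv (Eq.symm ?_); simp only [id_eq]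
  have h3 : HasDerivAt (fun w:ℝ => (2+w)*exp w) (1*exp w + (2+w)*exp w) w :=
    ((hasDerivAt_id w).const_add 2).mul (Real.hasDerivAt_exp w)
  have := (h1.sub h2).sub h3
  refine this.congr_deriv (Eq.symm ?_)
  unfold F4; ring

lemma hasDerivAt_F4 (w : ℝ) : HasDerivAt F4 (F5 w) w := by
  have h1 := (hasDerivAt_exp43 w).const_mul (256/81:ℝ)
  have h2 : HasDerivAt (fun w:ℝ => ((13+w)/81)*exp (w/3))
      ((1/81)*exp (w/3) + ((13+w)/81)*((1/3)*exp (w/3))) w := by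
    have := (((hasDerivAt_id w).const_add 13).div_const 81).mul (hasDerivAt_exp13 w)
    refine this.congr_deriv (Eq.symm ?_); simp only [id_eq]
  have h3 : HasDerivAt (fun w:ℝ => (3+w)*exp w) (1*exp w + (3+w)*exp w) w :=
    ((hasDerivAt_id w).const_add 3).mul (Real.hasDerivAt_exp w)
  have := (h1.sub h2).sub h3
  refine this.congr_deriv (Eq.symm ?_)
  unfold F5; ring

lemma F5_pos {w : ℝ} (hw : 0 ≤ w) : 0 < F5 w := by
  have h1 : exp (4*w/3) = exp w * exp (w/3) := by
    rw [← Real.exp_add]; ring_nf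
  have h2 : 1 + w/3 ≤ exp (w/3) := by
    have := Real.add_one_le_exp (w/3); linarith
  have h3 : exp (w/3) ≤ exp w := Real.exp_le_exp.2 (by linarith)
  have h4 : (0:ℝ) < exp w := exp_pos w
  have h5 : (0:ℝ) < exp (w/3) := exp_pos _
  unfold F5
  rw [h1]
  nlinarith [mul_le_mul_of_nonneg_left h2 (le_of_lt h4),
    mul_le_mul_of_nonneg_left h3 (by linarith : (0:ℝ) ≤ (16+w)/243)]

lemma F0_pos {w : ℝ} (hw : 0 < w) : 0 < F0 w := by
  have p5 : ∀ w, 0 < w → 0 < F5 w := fun w hw => F5_pos (le_of_lt hw)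
  have p4 := pos_of_deriv_pos hasDerivAt_F4 (by unfold F4; norm_num) p5
  have p3 := pos_of_deriv_pos hasDerivAt_F3 (by unfold F3; norm_num) p4
  have p2 := pos_of_deriv_pos hasDerivAt_F2 (by unfold F2; norm_num) p3
  have p1 := pos_of_deriv_pos hasDerivAt_F1 (by unfold F1; norm_num) p2
  exact pos_of_deriv_pos hasDerivAt_F0 (by unfold F0; norm_num) p1 w hw




noncomputable def H0 (w:ℝ) : ℝ := (w-4)*exp (2*w) + (2*w^2+8)*exp w - w - 4
noncomputable def H1 (w:ℝ) : ℝ := (2*w-7)*exp (2*w) + (2*w^2+4*w+8)*exp w - 1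
noncomputable def H2 (w:ℝ) : ℝ := (4*w-12)*exp (2*w) + (2*w^2+8*w+12)*exp w
noncomputable def H3 (w:ℝ) : ℝ := (8*w-20)*exp (2*w) + (2*w^2+12*w+20)*exp w
noncomputable def H4 (w:ℝ) : ℝ := (16*w-32)*exp (2*w) + (2*w^2+16*w+32)*exp w
noncomputable def H5 (w:ℝ) : ℝ := (32*w-48)*exp (2*w) + (2*w^2+20*w+48)*exp w
noncomputable def H6 (w:ℝ) : ℝ := (64*w-64)*exp (2*w) + (2*w^2+24*w+68)*exp w

lemma hasDerivAt_exp2 (w : ℝ) : HasDerivAt (fun w : ℝ => exp (2*w)) (2*exp (2*w)) w := by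
  have h : HasDerivAt (fun w : ℝ => 2*w) (2:ℝ) w := by
    simpa using (hasDerivAt_id w).const_mul (2:ℝ)
  simpa [mul_comm] using h.exp

lemma hasDerivAt_poly_exp2 (a b : ℝ) (w : ℝ) :
    HasDerivAt (fun w : ℝ => (a*w+b)*exp (2*w)) (a*exp (2*w) + (a*w+b)*(2*exp (2*w))) w := by
  have h1 : HasDerivAt (fun w : ℝ => a*w+b) a w := by
    simpa using ((hasDerivAt_id w).const_mul a).add_const b
  exact h1.mul (hasDerivAt_exp2 w)

lemma hasDerivAt_quad_exp (a b c : ℝ) (w : ℝ) :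
    HasDerivAt (fun w : ℝ => (a*w^2+b*w+c)*exp w)
      ((2*a*w+b)*exp w + (a*w^2+b*w+c)*exp w) w := by
  have h1 : HasDerivAt (fun w : ℝ => a*w^2+b*w+c) (2*a*w+b) w := by
    have hq : HasDerivAt (fun w : ℝ => w^2) (2*w) w := by
      simpa [pow_one] using hasDerivAt_pow 2 w
    have := ((hq.const_mul a).add ((hasDerivAt_id' (x := w)).const_mul b)).add_const c
    refine this.congr_deriv (Eq.symm ?_)
    ring
  exact h1.mul (Real.hasDerivAt_exp w)

lemma hasDerivAt_H0 (w : ℝ) : HasDerivAt H0 (H1 w) w := by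
  have h1 := hasDerivAt_poly_exp2 1 (-4) w
  have h2 := hasDerivAt_quad_exp 2 0 8 w
  have h3 : HasDerivAt (fun w:ℝ => w + 4) 1 w := (hasDerivAt_id w).add_const 4
  have := (h1.add h2).sub h3
  refine (this.congr_deriv (Eq.symm ?_)).congr_of_eventuallyEq ?_
  · unfold H1; ring
  · filter_upwards with u; unfold H0; simp only [Pi.add_apply, Pi.sub_apply]; ring

lemma hasDerivAt_H1 (w : ℝ) : HasDerivAt H1 (H2 w) w := by
  have h1 := hasDerivAt_poly_exp2 2 (-7) w
  have h2 := hasDerivAt_quad_exp 2 4 8 w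
  have := (h1.add h2).sub_const 1
  refine (this.congr_deriv (Eq.symm ?_)).congr_of_eventuallyEq ?_
  · unfold H2; ring
  · filter_upwards with u; unfold H1; simp only [Pi.add_apply, Pi.sub_apply]; ring

lemma hasDerivAt_H2 (w : ℝ) : HasDerivAt H2 (H3 w) w := by
  have h1 := hasDerivAt_poly_exp2 4 (-12) w
  have h2 := hasDerivAt_quad_exp 2 8 12 w
  have := h1.add h2
  refine (this.congr_deriv (Eq.symm ?_)).congr_of_eventuallyEq ?_
  · unfold H3; ring
  · filter_upwards with u; unfold H2; simp only [Pi.add_apply, Pi.sub_apply]; ring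

lemma hasDerivAt_H3 (w : ℝ) : HasDerivAt H3 (H4 w) w := by
  have h1 := hasDerivAt_poly_exp2 8 (-20) w
  have h2 := hasDerivAt_quad_exp 2 12 20 w
  have := h1.add h2
  refine (this.congr_deriv (Eq.symm ?_)).congr_of_eventuallyEq ?_
  · unfold H4; ring
  · filter_upwards with u; unfold H3; simp only [Pi.add_apply, Pi.sub_apply]; ring

lemma hasDerivAt_H4 (w : ℝ) : HasDerivAt H4 (H5 w) w := by
  have h1 := hasDerivAt_poly_exp2 16 (-32) w
  have h2 := hasDerivAt_quad_exp 2 16 32 w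
  have := h1.add h2
  refine (this.congr_deriv (Eq.symm ?_)).congr_of_eventuallyEq ?_
  · unfold H5; ring
  · filter_upwards with u; unfold H4; simp only [Pi.add_apply, Pi.sub_apply]; ring

lemma hasDerivAt_H5 (w : ℝ) : HasDerivAt H5 (H6 w) w := by
  have h1 := hasDerivAt_poly_exp2 32 (-48) w
  have h2 := hasDerivAt_quad_exp 2 20 48 w
  have := h1.add h2
  refine (this.congr_deriv (Eq.symm ?_)).congr_of_eventuallyEq ?_
  · unfold H6; ring
  · filter_upwards with u; unfold H5; simp only [Pi.add_apply, Pi.sub_apply]; ring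

lemma one_sub_mul_exp_le_one (w : ℝ) : (1 - w) * exp w ≤ 1 := by
  have h := Real.add_one_le_exp (-w)
  have hp : (0:ℝ) < exp w := exp_pos w
  have : (-w + 1) * exp w ≤ exp (-w) * exp w := by nlinarith [exp_pos (-w)]
  rw [← Real.exp_add, neg_add_cancel, Real.exp_zero] at this
  nlinarith

lemma H6_pos {w : ℝ} (hw : 0 ≤ w) : 0 < H6 w := by
  have h1 : exp (2*w) = exp w * exp w := by rw [← Real.exp_add]; ring_nf
  have h2 := one_sub_mul_exp_le_one w
  have h4 : (0:ℝ) < exp w := exp_pos w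
  unfold H6
  rw [h1]
  -- (64w-64) e^w e^w + (2w²+24w+68) e^w ≥ e^w(-64 + 2w²+24w+68) > 0
  have key : (64*w-64) * exp w ≥ -64 := by nlinarith
  nlinarith

lemma H0_pos {w : ℝ} (hw : 0 < w) : 0 < H0 w := by
  have p6 : ∀ w, 0 < w → 0 < H6 w := fun w hw => H6_pos (le_of_lt hw)
  have p5 := pos_of_deriv_pos hasDerivAt_H5 (by unfold H5; norm_num) p6
  have p4 := pos_of_deriv_pos hasDerivAt_H4 (by unfold H4; norm_num) p5
  have p3 := pos_of_deriv_pos hasDerivAt_H3 (by unfold H3; norm_num) p4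
  have p2 := pos_of_deriv_pos hasDerivAt_H2 (by unfold H2; norm_num) p3
  have p1 := pos_of_deriv_pos hasDerivAt_H1 (by unfold H1; norm_num) p2
  exact pos_of_deriv_pos hasDerivAt_H0 (by unfold H0; norm_num) p1 w hw

/-- `H ≤ w⁶` on `[0,1]`. -/
lemma H0_le_pow6 {w : ℝ} (hw : w ∈ Icc (0:ℝ) 1) : H0 w ≤ w^6 := by
  -- K_j(w) := d^j(w^6) - H_j(w)
  have e1 : Real.exp 1 < 2.7182818286 := Real.exp_one_lt_d9
  have k6 : ∀ u, u ∈ Ioo (0:ℝ) 1 → 0 ≤ 720 - H6 u := by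
    intro u hu
    have h1 : exp (2*u) = exp u * exp u := by rw [← Real.exp_add]; ring_nf
    have h4 : (0:ℝ) < exp u := exp_pos u
    have h5 : exp u ≤ 2.7182818286 := by
      have := Real.exp_le_exp.2 (le_of_lt hu.2); linarith
    unfold H6
    rw [h1]
    have hneg : (64*u-64) * (exp u * exp u) ≤ 0 := by nlinarith [hu.2]
    nlinarith [hu.1, hu.2]
  -- chain down
  have d5 : ∀ u:ℝ, HasDerivAt (fun u:ℝ => 720*u - H5 u) (720 - H6 u) u := by
    intro u
    have := ((hasDerivAt_id' (x := u)).const_mul (720:ℝ)).sub (hasDerivAt_H5 u)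
    refine this.congr_deriv (Eq.symm ?_)
    ring
  have k5 := nonneg_of_deriv_nonneg d5 (by unfold H5; norm_num) k6
  have d4 : ∀ u:ℝ, HasDerivAt (fun u:ℝ => 360*u^2 - H4 u) (720*u - H5 u) u := by
    intro u
    have hq : HasDerivAt (fun u : ℝ => u^2) (2*u) u := by
      simpa [pow_one] using hasDerivAt_pow 2 u
    have := (hq.const_mul (360:ℝ)).sub (hasDerivAt_H4 u)
    refine this.congr_deriv (Eq.symm ?_); ring
  have k4 := nonneg_of_deriv_nonneg d4 (by unfold H4; norm_num)
    (fun u hu => k5 u ⟨le_of_lt hu.1, le_of_lt hu.2⟩)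
  have d3 : ∀ u:ℝ, HasDerivAt (fun u:ℝ => 120*u^3 - H3 u) (360*u^2 - H4 u) u := by
    intro u
    have hq : HasDerivAt (fun u : ℝ => u^3) (3*u^2) u := by
      simpa using hasDerivAt_pow 3 u
    have := (hq.const_mul (120:ℝ)).sub (hasDerivAt_H3 u)
    refine this.congr_deriv (Eq.symm ?_); ring
  have k3 := nonneg_of_deriv_nonneg d3 (by unfold H3; norm_num)
    (fun u hu => k4 u ⟨le_of_lt hu.1, le_of_lt hu.2⟩)
  have d2 : ∀ u:ℝ, HasDerivAt (fun u:ℝ => 30*u^4 - H2 u) (120*u^3 - H3 u) u := by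
    intro u
    have hq : HasDerivAt (fun u : ℝ => u^4) (4*u^3) u := by
      simpa using hasDerivAt_pow 4 u
    have := (hq.const_mul (30:ℝ)).sub (hasDerivAt_H2 u)
    refine this.congr_deriv (Eq.symm ?_); ring
  have k2 := nonneg_of_deriv_nonneg d2 (by unfold H2; norm_num)
    (fun u hu => k3 u ⟨le_of_lt hu.1, le_of_lt hu.2⟩)
  have d1 : ∀ u:ℝ, HasDerivAt (fun u:ℝ => 6*u^5 - H1 u) (30*u^4 - H2 u) u := by
    intro u
    have hq : HasDerivAt (fun u : ℝ => u^5) (5*u^4) u := by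
      simpa using hasDerivAt_pow 5 u
    have := (hq.const_mul (6:ℝ)).sub (hasDerivAt_H1 u)
    refine this.congr_deriv (Eq.symm ?_); ring
  have k1 := nonneg_of_deriv_nonneg d1 (by unfold H1; norm_num)
    (fun u hu => k2 u ⟨le_of_lt hu.1, le_of_lt hu.2⟩)
  have d0 : ∀ u:ℝ, HasDerivAt (fun u:ℝ => u^6 - H0 u) (6*u^5 - H1 u) u := by
    intro u
    have hq : HasDerivAt (fun u : ℝ => u^6) (6*u^5) u := by
      simpa using hasDerivAt_pow 6 u
    exact hq.sub (hasDerivAt_H0 u)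
  have k0 := nonneg_of_deriv_nonneg d0 (by unfold H0; norm_num)
    (fun u hu => k1 u ⟨le_of_lt hu.1, le_of_lt hu.2⟩)
  linarith [k0 w hw]

/-- helper: nonneg on `[0,∞)` from zero value and nonneg derivative. -/
lemma nonneg_of_deriv_nonneg_Ici {f g : ℝ → ℝ} (hd : ∀ w, HasDerivAt f (g w) w) (h0 : f 0 = 0)
    (hp : ∀ w, 0 < w → 0 ≤ g w) : ∀ w, 0 ≤ w → 0 ≤ f w := by
  have hmono : MonotoneOn f (Ici (0:ℝ)) := by
    apply monotoneOn_of_deriv_nonneg (convex_Ici 0)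
      (fun x _ => (hd x).continuousAt.continuousWithinAt)
      (fun x _ => (hd x).differentiableAt.differentiableWithinAt)
    intro x hx
    rw [interior_Ici] at hx
    rw [(hd x).deriv]
    exact hp x hx
  intro w hw
  have := hmono self_mem_Ici hw hw
  rwa [h0] at this

/-- `e^{2w} + 1 ≥ (w²+2) e^w` for `w ≥ 0`, i.e. `cosh w ≥ 1 + w²/2`. -/
lemma cosh_ineq {w : ℝ} (hw : 0 ≤ w) : (w^2+2) * exp w ≤ exp (2*w) + 1 := by
  have d0 : ∀ u:ℝ, HasDerivAt (fun u:ℝ => exp (2*u) + 1 - (1*u^2+0*u+2)*exp u)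
      (2*exp (2*u) - (1*u^2+2*u+2)*exp u) u := by
    intro u
    have := ((hasDerivAt_exp2 u).add_const 1).sub (hasDerivAt_quad_exp 1 0 2 u)
    refine this.congr_deriv (Eq.symm ?_)
    ring
  have d1 : ∀ u:ℝ, HasDerivAt (fun u:ℝ => 2*exp (2*u) - (1*u^2+2*u+2)*exp u)
      (4*exp (2*u) - (1*u^2+4*u+4)*exp u) u := by
    intro u
    have := ((hasDerivAt_exp2 u).const_mul (2:ℝ)).sub (hasDerivAt_quad_exp 1 2 2 u)
    refine this.congr_deriv (Eq.symm ?_)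
    ring
  have p2 : ∀ u:ℝ, 0 < u → (0:ℝ) ≤ 4*exp (2*u) - (1*u^2+4*u+4)*exp u := by
    intro u hu
    have h2 : u/2 + 1 ≤ exp (u/2) := by have := Real.add_one_le_exp (u/2); linarith
    have h3 : (0:ℝ) < exp (u/2) := exp_pos _
    have h5 : exp u = exp (u/2) * exp (u/2) := by rw [← Real.exp_add]; ring_nf
    have h1 : exp (2*u) = exp u * exp u := by rw [← Real.exp_add]; ring_nf
    have h6 : (u/2+1)*(u/2+1) ≤ exp (u/2) * exp (u/2) :=
      mul_le_mul h2 h2 (by linarith) h3.le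
    have h7 : (0:ℝ) ≤ 4*(exp (u/2)*exp (u/2)) - (1*u^2+4*u+4) := by nlinarith
    rw [h1, h5]
    nlinarith [mul_nonneg h7 (mul_pos h3 h3).le]
  have p1 := nonneg_of_deriv_nonneg_Ici d1 (by norm_num) p2
  have p0 := nonneg_of_deriv_nonneg_Ici d0 (by norm_num) (fun u hu => p1 u (le_of_lt hu))
  have := p0 w hw
  nlinarith [this]

lemma Psi_eq {w : ℝ} (hw : 0 < w) :
    Psi w = H0 w / (6 * (exp w - 1 - w) * (w * exp w - exp w + 1)) := by
  have h1 := expm1_pos hw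
  have h2 := D1_pos hw
  have h3 := D2_pos hw
  rw [Psi, xw, yw, H0]
  have e2 : exp (2*w) = exp w * exp w := by rw [← Real.exp_add]; ring_nf
  rw [e2]
  rw [mul_div_assoc', mul_div_assoc', one_div_div, one_div_div,
    div_sub_div _ _ (by positivity) (by positivity), div_sub_div _ _ (by positivity) three_ne_zero,
    div_eq_div_iff (by positivity) (by positivity)]
  ring

lemma Psi_pos {w : ℝ} (hw : 0 < w) : 0 < Psi w := by
  rw [Psi_eq hw]
  exact div_pos (H0_pos hw) (by nlinarith [expm1_pos hw, D1_pos hw, D2_pos hw])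

lemma Psi_le_sixth {w : ℝ} (hw : 0 < w) : Psi w ≤ 1/6 := by
  rw [Psi_eq hw]
  have h1 := expm1_pos hw
  have h2 := D1_pos hw
  have h3 := D2_pos hw
  have hc := cosh_ineq (le_of_lt hw)
  have e2 : exp (2*w) = exp w * exp w := by rw [← Real.exp_add]; ring_nf
  rw [e2] at hc
  rw [div_le_iff₀ (by nlinarith)]
  unfold H0
  rw [show exp (2*w) = exp w * exp w from by rw [← Real.exp_add]; ring_nf]
  nlinarith

lemma D2_ge {w : ℝ} (hw : 0 ≤ w) : w^2/2 ≤ w * exp w - exp w + 1 := by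
  have d : ∀ u:ℝ, HasDerivAt (fun u:ℝ => u * exp u - exp u + 1 - u^2/2)
      (u * exp u - u) u := by
    intro u
    have h1 : HasDerivAt (fun u:ℝ => u * exp u) (1*exp u + u*exp u) u :=
      (hasDerivAt_id' (x := u)).mul (Real.hasDerivAt_exp u)
    have h2 : HasDerivAt (fun u:ℝ => u^2/2) u u := by
      have hq : HasDerivAt (fun u : ℝ => u^2) (2*u) u := by
        simpa [pow_one] using hasDerivAt_pow 2 u
      simpa using hq.div_const 2
    have := ((h1.sub (Real.hasDerivAt_exp u)).add_const 1).sub h2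
    refine this.congr_deriv (Eq.symm ?_)
    ring
  have := nonneg_of_deriv_nonneg_Ici d (by norm_num)
    (fun u hu => by nlinarith [expm1_pos hu, exp_pos u]) w hw
  linarith

lemma D1_ge {w : ℝ} (hw : 0 ≤ w) : w^2/2 ≤ exp w - 1 - w := by
  have := Real.sum_le_exp_of_nonneg hw 3
  have hs : ∑ i ∈ Finset.range 3, w ^ i / i.factorial = 1 + w + w^2/2 := by
    simp [Finset.sum_range_succ, Nat.factorial]
  rw [hs] at this; linarith

lemma Psi_le_quad {w : ℝ} (hw : 0 < w) (hw1 : w ≤ 1) : Psi w ≤ (2/3) * w^2 := by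
  rw [Psi_eq hw]
  have h2 := D1_pos hw
  have h3 := D2_pos hw
  have hd1 := D1_ge (le_of_lt hw)
  have hd2 := D2_ge (le_of_lt hw)
  have hH := H0_le_pow6 ⟨le_of_lt hw, hw1⟩
  rw [div_le_iff₀ (by nlinarith)]
  have h4 : w^2/2 * (w^2/2) ≤ (exp w - 1 - w) * (w * exp w - exp w + 1) :=
    mul_le_mul hd1 hd2 (by positivity) (le_of_lt h2)
  nlinarith [sq_nonneg w, pow_pos hw 6]

/-- The key inequality `y < e^{w/3} x`, from `F0 > 0`. -/
lemma key_ineq {w : ℝ} (hw : 0 < w) : yw w < exp (w/3) * xw w := by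
  have h1 := expm1_pos hw
  have hF := F0_pos hw
  have hid : exp (w/3) * (exp w - 1 - w) - (w * exp w - exp w + 1) = F0 w := by
    unfold F0
    have : exp (4*w/3) = exp (w/3) * exp w := by rw [← Real.exp_add]; ring_nf
    rw [this]; ring
  rw [yw, xw]
  rw [div_lt_iff₀ h1, show exp (w/3) * ((exp w - 1 - w) / (exp w - 1)) * (exp w - 1)
    = exp (w/3) * (exp w - 1 - w) from by field_simp]
  linarith

/-- `e^w · x³ > y³`. -/
lemma key_ineq_cubed {w : ℝ} (hw : 0 < w) : yw w ^ 3 < exp w * xw w ^ 3 := by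
  have h := key_ineq hw
  have hy := yw_pos hw
  have hcube : yw w ^ 3 < (exp (w/3) * xw w) ^ 3 :=
    pow_lt_pow_left₀ h (le_of_lt hy) (by norm_num)
  have : (exp (w/3)) ^ 3 = exp w := by
    rw [← Real.exp_nat_mul]
    congr 1
    ring
  calc yw w ^ 3 < (exp (w/3) * xw w) ^ 3 := hcube
    _ = exp w * xw w ^ 3 := by rw [mul_pow, this]

lemma hasDerivAt_xw {w : ℝ} (hw : 0 < w) : HasDerivAt xw (yw w / (exp w - 1)) w := by
  have h1 := expm1_pos hw
  have hnum : HasDerivAt (fun w:ℝ => exp w - 1 - w) (exp w - 1) w := by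
    have := ((Real.hasDerivAt_exp w).sub_const 1).sub (hasDerivAt_id' (x := w))
    refine this.congr_deriv (Eq.symm ?_) <;> ring
  have hden : HasDerivAt (fun w:ℝ => exp w - 1) (exp w) w := by
    simpa using (Real.hasDerivAt_exp w).sub_const 1
  have := hnum.div hden (ne_of_gt h1)
  refine this.congr_deriv (Eq.symm ?_)
  rw [yw]
  field_simp
  ring

lemma hasDerivAt_yw {w : ℝ} (hw : 0 < w) :
    HasDerivAt yw (exp w * xw w / (exp w - 1)) w := by
  have h1 := expm1_pos hw
  have hnum : HasDerivAt (fun w:ℝ => w * exp w - exp w + 1) (w * exp w) w := by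
    have h2 : HasDerivAt (fun u:ℝ => u * exp u) (1*exp w + w*exp w) w :=
      (hasDerivAt_id' (x := w)).mul (Real.hasDerivAt_exp w)
    have := (h2.sub (Real.hasDerivAt_exp w)).add_const 1
    refine this.congr_deriv (Eq.symm ?_); ring
  have hden : HasDerivAt (fun w:ℝ => exp w - 1) (exp w) w := by
    simpa using (Real.hasDerivAt_exp w).sub_const 1
  have := hnum.div hden (ne_of_gt h1)
  refine this.congr_deriv (Eq.symm ?_)
  rw [xw]
  field_simp
  ring

/-- derivative of `Ψ`. -/
noncomputable def Psi' (w : ℝ) : ℝ :=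
  (exp w * xw w ^ 3 - yw w ^ 3) / (2 * xw w ^ 2 * yw w ^ 2 * (exp w - 1))

lemma hasDerivAt_Psi {w : ℝ} (hw : 0 < w) : HasDerivAt Psi (Psi' w) w := by
  have h1 := expm1_pos hw
  have hx := xw_pos hw
  have hy := yw_pos hw
  have dx := hasDerivAt_xw hw
  have dy := hasDerivAt_yw hw
  have d2x : HasDerivAt (fun w:ℝ => 2 * xw w) (2 * (yw w / (exp w - 1))) w := dx.const_mul 2
  have d2y : HasDerivAt (fun w:ℝ => 2 * yw w) (2 * (exp w * xw w / (exp w - 1))) w :=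
    dy.const_mul 2
  have dix : HasDerivAt (fun w:ℝ => 1/(2 * xw w))
      (-(2 * (yw w / (exp w - 1))) / (2 * xw w)^2) w := by
    simpa [Pi.inv_def] using d2x.inv (by positivity)
  have diy : HasDerivAt (fun w:ℝ => 1/(2 * yw w))
      (-(2 * (exp w * xw w / (exp w - 1))) / (2 * yw w)^2) w := by
    simpa [Pi.inv_def] using d2y.inv (by positivity)
  have := (dix.sub diy).sub_const (1/3)
  refine this.congr_deriv (Eq.symm ?_)
  rw [Psi']
  field_simp
  ring

lemma Psi'_pos {w : ℝ} (hw : 0 < w) : 0 < Psi' w := by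
  have h1 := expm1_pos hw
  have hx := xw_pos hw
  have hy := yw_pos hw
  exact div_pos (by linarith [key_ineq_cubed hw]) (by positivity)

lemma Psi_strictMonoOn : StrictMonoOn Psi (Ioi (0:ℝ)) := by
  apply strictMonoOn_of_deriv_pos (convex_Ioi 0)
    (fun x hx => (hasDerivAt_Psi hx).continuousAt.continuousWithinAt)
  intro x hx
  rw [interior_Ioi] at hx
  rw [(hasDerivAt_Psi hx).deriv]
  exact Psi'_pos hx

/-- `ρ = |S'|`. -/
noncomputable def rho (w : ℝ) : ℝ := xw w * exp (xw w) * yw w / (exp w - 1)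

lemma rho_pos {w : ℝ} (hw : 0 < w) : 0 < rho w := by
  have := xw_pos hw; have := yw_pos hw; have := expm1_pos hw
  rw [rho]; positivity

lemma hasDerivAt_Sw {w : ℝ} (hw : 0 < w) : HasDerivAt Sw (-(rho w)) w := by
  have dx := hasDerivAt_xw hw
  have h1 : HasDerivAt (fun w:ℝ => 1 - xw w) (-(yw w / (exp w - 1))) w := by
    simpa using (dx.const_sub 1)
  have h2 : HasDerivAt (fun w:ℝ => exp (xw w)) (exp (xw w) * (yw w / (exp w - 1))) w :=
    dx.exp
  have := h1.mul h2
  refine this.congr_deriv (Eq.symm ?_)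
  rw [rho]
  field_simp
  ring

lemma Sw_strictAntiOn : StrictAntiOn Sw (Ioi (0:ℝ)) := by
  apply strictAntiOn_of_deriv_neg (convex_Ioi 0)
    (fun x hx => (hasDerivAt_Sw hx).continuousAt.continuousWithinAt)
  intro x hx
  rw [interior_Ioi] at hx
  rw [(hasDerivAt_Sw hx).deriv]
  exact neg_lt_zero.mpr (rho_pos hx)

lemma xw_le {w : ℝ} (hw : 0 < w) : xw w ≤ w := by
  have h1 := expm1_pos hw
  rw [xw, div_le_iff₀ h1]
  have h2 := Real.add_one_le_exp (-w)
  have h3 : exp (-w) * exp w = 1 := by rw [← Real.exp_add]; simp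
  nlinarith [exp_pos (-w), exp_pos w]

lemma yw_le {w : ℝ} (hw : 0 < w) : yw w ≤ w := by
  have h1 := expm1_pos hw
  rw [yw, div_le_iff₀ h1]
  have h2 := Real.add_one_le_exp w
  nlinarith

lemma yw_ge {w : ℝ} (hw : 0 < w) : w - 1 ≤ yw w := by
  have := xw_lt_one hw
  have := xw_add_yw hw
  linarith

lemma Sw_ge {w : ℝ} (hw : 0 < w) : 1 - w ≤ Sw w := by
  have h1 := xw_le hw
  have h2 := xw_lt_one hw
  have h3 : (1:ℝ) ≤ exp (xw w) := Real.one_le_exp (le_of_lt (xw_pos hw))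
  have : (1 - xw w) * 1 ≤ (1 - xw w) * exp (xw w) :=
    mul_le_mul_of_nonneg_left h3 (by linarith)
  rw [Sw]; nlinarith

lemma cube_le_exp {w : ℝ} (hw : 0 ≤ w) : w^3/6 ≤ exp w := by
  have := Real.sum_le_exp_of_nonneg hw 4
  have hs : ∑ i ∈ Finset.range 4, w ^ i / i.factorial = 1 + w + w^2/2 + w^3/6 := by
    simp [Finset.sum_range_succ, Nat.factorial]
  rw [hs] at this
  nlinarith [sq_nonneg w]

lemma Sw_le_of_one_le {w : ℝ} (hw : 1 ≤ w) : Sw w ≤ 36 / w^2 := by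
  have hw0 : (0:ℝ) < w := by linarith
  have h1 := expm1_pos hw0
  have hE : (2:ℝ) ≤ exp w := by
    calc (2:ℝ) ≤ 1 + w := by linarith
    _ ≤ exp w := by linarith [Real.add_one_le_exp w]
  have hE1 : exp w / 2 ≤ exp w - 1 := by linarith
  have hc := cube_le_exp (le_of_lt hw0)
  have hee : exp (xw w) ≤ 3 := by
    calc exp (xw w) ≤ exp 1 := Real.exp_le_exp.2 (le_of_lt (xw_lt_one hw0))
    _ ≤ 3 := by linarith [Real.exp_one_lt_d9]
  have h2 : Sw w ≤ (w / (exp w - 1)) * 3 := by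
    rw [Sw, one_sub_xw hw0]
    apply mul_le_mul_of_nonneg_left hee (by positivity)
  have h3 : w / (exp w - 1) ≤ w / (w^3/12) := by
    apply div_le_div_of_nonneg_left (le_of_lt hw0) (by positivity)
    nlinarith
  have h4 : w / (w^3/12) = 12 / w^2 := by
    field_simp
  calc Sw w ≤ (w / (exp w - 1)) * 3 := h2
    _ ≤ (12 / w^2) * 3 := by rw [← h4]; nlinarith [h3]
    _ = 36 / w^2 := by ring
  
lemma Sw_continuousOn : ContinuousOn Sw (Ioi (0:ℝ)) :=
  fun x hx => (hasDerivAt_Sw hx).continuousAt.continuousWithinAt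

lemma Sw_image : Sw '' (Ioi (0:ℝ)) = Ioo (0:ℝ) 1 := by
  apply Subset.antisymm
  · rintro s ⟨w, hw, rfl⟩
    exact ⟨Sw_pos hw, Sw_lt_one hw⟩
  · rintro s ⟨hs0, hs1⟩
    set a : ℝ := (1 - s)/2 with ha_def
    have ha : 0 < a := by simp [ha_def]; linarith
    have ha1 : Sw a ≥ (1+s)/2 := by
      have := Sw_ge ha
      simp only [ha_def] at this ⊢
      linarith
    have haS : s < Sw a := by linarith
    set b : ℝ := 6 / Real.sqrt s + 1 with hb_def
    have hs05 : (0:ℝ) < Real.sqrt s := Real.sqrt_pos.2 hs0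
    have hssq : Real.sqrt s * Real.sqrt s = s := Real.mul_self_sqrt (le_of_lt hs0)
    have hsle : Real.sqrt s ≤ 1 := by nlinarith
    have hb1 : (1:ℝ) ≤ b := by
      have : (6:ℝ)/Real.sqrt s ≥ 6 := by
        rw [ge_iff_le, le_div_iff₀ hs05]; nlinarith
      simp only [hb_def]; linarith
    have hbS : Sw b < s := by
      have h1 := Sw_le_of_one_le hb1
      have hb6 : 6 / Real.sqrt s < b := by simp only [hb_def]; linarith
      have hb0 : (0:ℝ) < b := by linarith
      have h2 : 36 / b^2 < s := by
        rw [div_lt_iff₀ (by positivity)]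
        have h3 : (6 / Real.sqrt s)^2 < b^2 := by
          apply pow_lt_pow_left₀ hb6 (by positivity)
          norm_num
        have h4 : (6 / Real.sqrt s)^2 = 36 / s := by
          rw [div_pow]
          congr 1
          · norm_num
          · rw [sq]; exact hssq
        have h5 : 36 / s < b^2 := by rw [← h4]; exact h3
        rw [div_lt_iff₀ hs0] at h5
        linarith
      linarith
    have hab : a < b := by
      have : a < 1 := by simp only [ha_def]; linarith
      linarith
    have hIVT := intermediate_value_Icc' (le_of_lt hab)
      (Sw_continuousOn.mono (fun t ht => lt_of_lt_of_le ha ht.1))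
    have hmem : s ∈ Icc (Sw b) (Sw a) := ⟨le_of_lt hbS, le_of_lt haS⟩
    obtain ⟨w, hw, hws⟩ := hIVT hmem
    exact ⟨w, lt_of_lt_of_le ha hw.1, hws⟩

/-- inverse of `S` on `(0,∞)`. -/
noncomputable def W : ℝ → ℝ := Function.invFunOn Sw (Ioi 0)

lemma Sw_injOn : InjOn Sw (Ioi (0:ℝ)) := Sw_strictAntiOn.injOn

lemma W_mem {s : ℝ} (hs : s ∈ Ioo (0:ℝ) 1) : W s ∈ Ioi (0:ℝ) := by
  have : s ∈ Sw '' (Ioi 0) := Sw_image ▸ hs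
  obtain ⟨w, hw, rfl⟩ := this
  exact Function.invFunOn_mem ⟨w, hw, rfl⟩

lemma Sw_W {s : ℝ} (hs : s ∈ Ioo (0:ℝ) 1) : Sw (W s) = s := by
  have : s ∈ Sw '' (Ioi 0) := Sw_image ▸ hs
  obtain ⟨w, hw, rfl⟩ := this
  exact Function.invFunOn_eq ⟨w, hw, rfl⟩

lemma W_Sw {w : ℝ} (hw : w ∈ Ioi (0:ℝ)) : W (Sw w) = w :=
  Sw_injOn.leftInvOn_invFunOn hw

lemma W_strictAnti {s t : ℝ} (hs : s ∈ Ioo (0:ℝ) 1) (ht : t ∈ Ioo (0:ℝ) 1)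
    (hst : s < t) : W t < W s := by
  rcases lt_trichotomy (W t) (W s) with h | h | h
  · exact h
  · exfalso
    have := congrArg Sw h
    rw [Sw_W ht, Sw_W hs] at this
    linarith
  · exfalso
    have := Sw_strictAntiOn (W_mem hs) (W_mem ht) h
    rw [Sw_W ht, Sw_W hs] at this
    linarith

/-- Taylor's formula with integral remainder for `exp`. -/
lemma exp_taylor_aux (c : ℝ) : ∀ m : ℕ,
    Real.exp c = (∑ k ∈ Finset.range (m+1), c^k / (k.factorial : ℝ))
      + (1/((m.factorial : ℝ))) * ∫ t in (0:ℝ)..c, (c - t)^m * exp t := by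
  intro m
  induction m with
  | zero =>
    simp [integral_exp]
  | succ m ih =>
    have hparts : ∫ t in (0:ℝ)..c, (c - t)^m * exp t
        = c^(m+1)/(m+1) + (1/(m+1)) * ∫ t in (0:ℝ)..c, (c - t)^(m+1) * exp t := by
      have hu : ∀ x ∈ uIcc (0:ℝ) c, HasDerivAt (fun t:ℝ => (c - t)^(m+1) / (m+1))
          (-(c - x)^m) x := by
        intro x _
        have h1 : HasDerivAt (fun t:ℝ => c - t) (-1) x := by
          simpa using (hasDerivAt_id' (x := x)).const_sub c
        have h2 := (h1.pow (m+1)).div_const ((m:ℝ)+1)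
        refine h2.congr_deriv (Eq.symm ?_)
        push_cast
        field_simp
      have hv : ∀ x ∈ uIcc (0:ℝ) c, HasDerivAt Real.exp (exp x) x :=
        fun x _ => Real.hasDerivAt_exp x
      have hu' : IntervalIntegrable (fun x:ℝ => -(c - x)^m) MeasureTheory.volume 0 c :=
        (Continuous.intervalIntegrable (by continuity) 0 c)
      have hv' : IntervalIntegrable Real.exp MeasureTheory.volume 0 c :=
        (Continuous.intervalIntegrable Real.continuous_exp 0 c)
      have := intervalIntegral.integral_mul_deriv_eq_deriv_mul hu hv hu' hv'
      -- this : ∫ (c-t)^{m+1}/(m+1) * exp t' ... rearrange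
      -- ∫ u v' = u c v c - u 0 v 0 - ∫ u' v
      -- u t = (c-t)^{m+1}/(m+1), v = exp
      -- ∫ (c-t)^{m+1}/(m+1) * exp = 0 - c^{m+1}/(m+1) - ∫ (-(c-t)^m) exp
      have hm1 : ((m:ℝ)+1) ≠ 0 := by positivity
      have h3 : ∫ t in (0:ℝ)..c, (c - t)^(m+1)/(m+1) * exp t
          = (1/((m:ℝ)+1)) * ∫ t in (0:ℝ)..c, (c - t)^(m+1) * exp t := by
        rw [← intervalIntegral.integral_const_mul]
        congr 1
        funext t
        ring
      rw [h3] at this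
      simp only [sub_self, zero_pow (Nat.succ_ne_zero m), sub_zero, zero_div,
        Real.exp_zero] at this
      have h4 : ∫ t in (0:ℝ)..c, -(c - t)^m * exp t
          = -∫ t in (0:ℝ)..c, (c - t)^m * exp t := by
        rw [← intervalIntegral.integral_neg]
        congr 1
        funext t
        ring
      rw [h4] at this
      -- this : (1/(m+1)) * ∫ (c-t)^{m+1} e = 0 * e^c - (c-0)^{m+1}/(m+1) * 1 - (- ∫ (c-t)^m e)
      push_cast at this ⊢
      linarith [this]
    rw [Finset.sum_range_succ]
    rw [ih, hparts]
    have hm : ((m:ℝ)+1) ≠ 0 := by positivity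
    have hf : ((m+1).factorial : ℝ) = (m.factorial : ℝ) * ((m:ℝ)+1) := by
      rw [Nat.factorial_succ]; push_cast; ring
    have hfm : (m.factorial : ℝ) ≠ 0 := by positivity
    rw [hf]
    push_cast
    field_simp
    ring

open MeasureTheory in
noncomputable def An (n : ℕ) : ℝ := ∫ u in Ioo (0:ℝ) 1, (1-u)^(n-1) * exp (n*u)
open MeasureTheory in
noncomputable def Bn (n : ℕ) : ℝ := ∫ u in Ioi (0:ℝ), (1+u)^(n-1) * exp (-(n*u))

open MeasureTheory

lemma exp_taylor (n : ℕ) (hn : 1 ≤ n) :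
    Real.exp n = (∑ k ∈ Finset.range n, (n:ℝ)^k / (k.factorial : ℝ))
      + ((n:ℝ)^n/(((n-1).factorial : ℝ))) * An n := by
  have h := exp_taylor_aux (n:ℝ) (n-1)
  rw [Nat.sub_add_cancel hn] at h
  have hn0 : (0:ℝ) < n := by exact_mod_cast hn
  -- change of variables t = n u in the remainder integral
  have hsub : ∫ t in (0:ℝ)..(n:ℝ), ((n:ℝ) - t)^(n-1) * exp t
      = (n:ℝ)^n * An n := by
    have h1 := intervalIntegral.integral_comp_mul_left
      (f := fun t => ((n:ℝ) - t)^(n-1) * exp t) (a := (0:ℝ)) (b := (1:ℝ))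
      (c := (n:ℝ)) (ne_of_gt hn0)
    rw [mul_zero, mul_one] at h1
    -- h1 : ∫ u in 0..1, f (n u) = n⁻¹ • ∫ t in 0..n, f t
    have h2 : ∀ u : ℝ, ((n:ℝ) - (n:ℝ)*u)^(n-1) * exp ((n:ℝ)*u)
        = (n:ℝ)^(n-1) * ((1-u)^(n-1) * exp ((n:ℝ)*u)) := by
      intro u
      rw [show (n:ℝ) - (n:ℝ)*u = (n:ℝ)*(1-u) by ring, mul_pow]
      ring
    rw [show (fun x => ((n:ℝ) - (n:ℝ)*x)^(n-1) * exp ((n:ℝ)*x))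
      = (fun x => (n:ℝ)^(n-1) * ((1-x)^(n-1) * exp ((n:ℝ)*x))) from funext h2,
      intervalIntegral.integral_const_mul] at h1
    have h3 : ∫ u in (0:ℝ)..(1:ℝ), (1-u)^(n-1) * exp ((n:ℝ)*u) = An n := by
      rw [intervalIntegral.integral_of_le zero_le_one, An,
        ← integral_Ioc_eq_integral_Ioo]
    rw [h3] at h1
    have hpow : (n:ℝ)^n = (n:ℝ) * (n:ℝ)^(n-1) := by
      have h := pow_succ (n:ℝ) (n-1)
      rw [Nat.sub_add_cancel hn] at h
      rw [h]; ring
    rw [hpow]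
    rw [smul_eq_mul] at h1
    field_simp at h1
    linarith [h1]
  rw [hsub] at h
  rw [h]
  ring

lemma gamma_fact (n : ℕ) (hn : 1 ≤ n) :
    (((n-1).factorial : ℝ)) = ∫ t in Ioi (0:ℝ), exp (-t) * t^(n-1) := by
  have h1 : Real.Gamma ((n-1:ℕ) + 1) = ((n-1).factorial : ℝ) :=
    Real.Gamma_nat_eq_factorial (n-1)
  have hcast : ((n-1:ℕ):ℝ) + 1 = (n:ℝ) := by
    have : ((n-1:ℕ):ℝ) = (n:ℝ) - 1 := by
      push_cast [Nat.cast_sub hn]; ring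
    rw [this]; ring
  rw [hcast] at h1
  rw [← h1, Real.Gamma_eq_integral (by exact_mod_cast hn : (0:ℝ) < n)]
  apply setIntegral_congr_fun measurableSet_Ioi
  intro t ht
  have hh : t ^ ((n:ℝ)-1) = t^(n-1 : ℕ) := by
    rw [show (n:ℝ)-1 = ((n-1:ℕ):ℝ) by rw [← hcast]; ring]
    exact Real.rpow_natCast t (n-1)
  simp only [hh]

lemma integrableOn_gamma (n : ℕ) (hn : 1 ≤ n) :
    IntegrableOn (fun t => exp (-t) * t^(n-1)) (Ioi (0:ℝ)) := by
  have h := Real.GammaIntegral_convergent (s := (n:ℝ)) (by exact_mod_cast hn)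
  apply h.congr_fun _ measurableSet_Ioi
  intro t ht
  have hh : t ^ ((n:ℝ)-1) = t^(n-1 : ℕ) := by
    rw [show (n:ℝ)-1 = ((n-1:ℕ):ℝ) by push_cast [Nat.cast_sub hn]; ring]
    exact Real.rpow_natCast t (n-1)
  simp only [hh]

/-- the affine substitution `t = n (1 + u)`. -/
lemma affine_image (n : ℕ) (hn : 1 ≤ n) :
    (fun u : ℝ => (n:ℝ) * (1 + u)) '' (Ioi (-1:ℝ)) = Ioi (0:ℝ) := by
  have hn0 : (0:ℝ) < n := by exact_mod_cast hn
  ext t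
  constructor
  · rintro ⟨u, hu, rfl⟩
    have h1 : (-1:ℝ) < u := mem_Ioi.mp hu
    exact mul_pos hn0 (by linarith)
  · intro ht
    refine ⟨t/(n:ℝ) - 1, ?_, ?_⟩
    · simp only [mem_Ioi] at ht ⊢
      have : 0 < t/(n:ℝ) := div_pos ht hn0
      linarith
    · field_simp; ring

lemma affine_subst (n : ℕ) (hn : 1 ≤ n) (g : ℝ → ℝ) :
    ∫ t in Ioi (0:ℝ), g t = ∫ u in Ioi (-1:ℝ), (n:ℝ) * g ((n:ℝ)*(1+u)) := by
  have hn0 : (0:ℝ) < n := by exact_mod_cast hn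
  have hd : ∀ u ∈ Ioi (-1:ℝ), HasDerivWithinAt (fun u : ℝ => (n:ℝ) * (1 + u)) (n:ℝ)
      (Ioi (-1:ℝ)) u := by
    intro u _
    have : HasDerivAt (fun u : ℝ => (n:ℝ) * (1 + u)) ((n:ℝ) * 1) u :=
      ((hasDerivAt_id' (x := u)).const_add 1).const_mul (n:ℝ)
    simpa using this.hasDerivWithinAt
  have hinj : InjOn (fun u : ℝ => (n:ℝ) * (1 + u)) (Ioi (-1:ℝ)) := by
    intro a _ b _ hab
    simp only at hab
    have := mul_left_cancel₀ (ne_of_gt hn0) hab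
    linarith
  have := integral_image_eq_integral_abs_deriv_smul measurableSet_Ioi hd hinj g
  rw [affine_image n hn] at this
  rw [this]
  apply setIntegral_congr_fun measurableSet_Ioi
  intro u _
  simp [abs_of_pos hn0]

lemma neg_image : (fun v : ℝ => -v) '' (Ioo (0:ℝ) 1) = Ioo (-1:ℝ) 0 := by
  ext t
  simp only [mem_image, mem_Ioo]
  constructor
  · rintro ⟨v, ⟨hv1, hv2⟩, rfl⟩
    constructor <;> linarith
  · rintro ⟨ht1, ht2⟩
    exact ⟨-t, ⟨by linarith, by linarith⟩, by ring⟩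

lemma neg_subst (g : ℝ → ℝ) :
    ∫ t in Ioo (-1:ℝ) 0, g t = ∫ v in Ioo (0:ℝ) 1, g (-v) := by
  have hd : ∀ v ∈ Ioo (0:ℝ) 1, HasDerivWithinAt (fun v : ℝ => -v) (-1:ℝ)
      (Ioo (0:ℝ) 1) v := fun v _ => (hasDerivAt_neg v).hasDerivWithinAt
  have hinj : InjOn (fun v : ℝ => -v) (Ioo (0:ℝ) 1) := fun a _ b _ hab => by
    simpa using hab
  have := integral_image_eq_integral_abs_deriv_smul measurableSet_Ioo hd hinj g
  rw [neg_image] at this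
  rw [this]
  apply setIntegral_congr_fun measurableSet_Ioo
  intro v _
  simp

/-- integrability of the `Bn`-type integrand on `Ioi (-1)`. -/
lemma integrableOn_Bn_full (n : ℕ) (hn : 1 ≤ n) :
    IntegrableOn (fun u : ℝ => (1+u)^(n-1) * exp (-((n:ℝ)*u))) (Ioi (-1:ℝ)) := by
  have hn0 : (0:ℝ) < n := by exact_mod_cast hn
  have hd : ∀ u ∈ Ioi (-1:ℝ), HasDerivWithinAt (fun u : ℝ => (n:ℝ) * (1 + u)) (n:ℝ)
      (Ioi (-1:ℝ)) u := by
    intro u _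
    have : HasDerivAt (fun u : ℝ => (n:ℝ) * (1 + u)) ((n:ℝ) * 1) u :=
      ((hasDerivAt_id' (x := u)).const_add 1).const_mul (n:ℝ)
    simpa using this.hasDerivWithinAt
  have hinj : InjOn (fun u : ℝ => (n:ℝ) * (1 + u)) (Ioi (-1:ℝ)) := by
    intro a _ b _ hab
    simp only at hab
    have := mul_left_cancel₀ (ne_of_gt hn0) hab
    linarith
  have hiff := integrableOn_image_iff_integrableOn_abs_deriv_smul measurableSet_Ioi hd hinj
    (fun t => exp (-t) * t^(n-1))
  rw [affine_image n hn] at hiff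
  have h1 := hiff.mp (integrableOn_gamma n hn)
  -- h1 : IntegrableOn (fun u => |n| • (exp(-(n(1+u))) * (n(1+u))^{n-1})) (Ioi (-1))
  have h2 : IntegrableOn (fun u : ℝ =>
      ((n:ℝ)^n * exp (-(n:ℝ))) * ((1+u)^(n-1) * exp (-((n:ℝ)*u)))) (Ioi (-1:ℝ)) := by
    apply h1.congr_fun _ measurableSet_Ioi
    intro u hu
    have hu1 : (0:ℝ) < 1 + u := by have := mem_Ioi.mp hu; linarith
    have hexp : exp (-((n:ℝ)*(1+u))) = exp (-(n:ℝ)) * exp (-((n:ℝ)*u)) := by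
      rw [← Real.exp_add]; ring_nf
    have hpow : ((n:ℝ)*(1+u))^(n-1) = (n:ℝ)^(n-1) * (1+u)^(n-1) := mul_pow _ _ _
    have hnn : (n:ℝ)^n = (n:ℝ) * (n:ℝ)^(n-1) := by
      have h := pow_succ (n:ℝ) (n-1)
      rw [Nat.sub_add_cancel hn] at h
      rw [h]; ring
    simp only [smul_eq_mul, abs_of_pos hn0]
    rw [hexp, hpow, hnn]
    ring
  have hc : ((n:ℝ)^n * exp (-(n:ℝ))) ≠ 0 := by positivity
  have := (integrable_const_mul_iff (c := (n:ℝ)^n * exp (-(n:ℝ)))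
    (isUnit_iff_ne_zero.mpr hc) (fun u : ℝ => (1+u)^(n-1) * exp (-((n:ℝ)*u)))).mp h2
  exact this

lemma gamma_split (n : ℕ) (hn : 1 ≤ n) :
    ((n-1).factorial : ℝ) = (n:ℝ)^n * exp (-(n:ℝ)) * (An n + Bn n) := by
  have hn0 : (0:ℝ) < n := by exact_mod_cast hn
  rw [gamma_fact n hn, affine_subst n hn (fun t => exp (-t) * t^(n-1))]
  have heq : EqOn (fun u : ℝ => (n:ℝ) * (exp (-((n:ℝ)*(1+u))) * ((n:ℝ)*(1+u))^(n-1)))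
      (fun u : ℝ => ((n:ℝ)^n * exp (-(n:ℝ))) * ((1+u)^(n-1) * exp (-((n:ℝ)*u))))
      (Ioi (-1:ℝ)) := by
    intro u hu
    have hu1 : (0:ℝ) < 1 + u := by have := mem_Ioi.mp hu; linarith
    have hexp : exp (-((n:ℝ)*(1+u))) = exp (-(n:ℝ)) * exp (-((n:ℝ)*u)) := by
      rw [← Real.exp_add]; ring_nf
    have hpow : ((n:ℝ)*(1+u))^(n-1) = (n:ℝ)^(n-1) * (1+u)^(n-1) := mul_pow _ _ _
    have hnn : (n:ℝ)^n = (n:ℝ) * (n:ℝ)^(n-1) := by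
      have h := pow_succ (n:ℝ) (n-1)
      rw [Nat.sub_add_cancel hn] at h
      rw [h]; ring
    simp only
    rw [hexp, hpow, hnn]
    ring
  rw [setIntegral_congr_fun measurableSet_Ioi heq, integral_const_mul]
  congr 1
  -- split the integral over Ioi (-1)
  have hset : Ioi (-1:ℝ) = Ioo (-1) 0 ∪ Ici 0 := by
    ext t
    simp only [mem_Ioi, mem_union, mem_Ioo, mem_Ici]
    constructor
    · intro h
      rcases lt_or_ge t 0 with h2 | h2
      · exact Or.inl ⟨h, h2⟩
      · exact Or.inr h2
    · rintro (⟨h1, _⟩ | h1)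
      · exact h1
      · linarith
  have hdisj : Disjoint (Ioo (-1:ℝ) 0) (Ici (0:ℝ)) := by
    rw [Set.disjoint_left]
    intro t ht hts
    exact absurd (mem_Ici.mp hts) (not_le.mpr ht.2)
  have hint := integrableOn_Bn_full n hn
  have hint1 : IntegrableOn (fun u : ℝ => (1+u)^(n-1) * exp (-((n:ℝ)*u))) (Ioo (-1:ℝ) 0) :=
    hint.mono_set (fun t ht => ht.1)
  have hint2 : IntegrableOn (fun u : ℝ => (1+u)^(n-1) * exp (-((n:ℝ)*u))) (Ici (0:ℝ)) :=
    hint.mono_set (fun t ht => by simp only [mem_Ioi]; linarith [mem_Ici.mp ht])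
  rw [hset, setIntegral_union hdisj measurableSet_Ici hint1 hint2]
  have hIci : ∫ u in Ici (0:ℝ), (1+u)^(n-1) * exp (-((n:ℝ)*u)) = Bn n := by
    rw [Bn, ← integral_Ici_eq_integral_Ioi]
  have hIoo : ∫ u in Ioo (-1:ℝ) 0, (1+u)^(n-1) * exp (-((n:ℝ)*u)) = An n := by
    rw [neg_subst (fun u => (1+u)^(n-1) * exp (-((n:ℝ)*u))), An]
    apply setIntegral_congr_fun measurableSet_Ioo
    intro v hv
    simp only
    rw [show (1:ℝ) + -v = 1 - v by ring, show -((n:ℝ) * -v) = (n:ℝ)*v by ring]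
  rw [hIci, hIoo]

lemma sigma_eq (n : ℕ) (hn : 1 ≤ n) :
    sigmaSzego n = (n:ℝ)/2 * (An n - Bn n) - 1/3 := by
  have hn0 : (0:ℝ) < n := by exact_mod_cast hn
  have hP : (0:ℝ) < (n:ℝ)^n := by positivity
  have hFm : (0:ℝ) < ((n-1).factorial : ℝ) := by exact_mod_cast Nat.factorial_pos _
  have hE : (0:ℝ) < exp (n:ℝ) := exp_pos _
  have hG : exp (n:ℝ) * ((n-1).factorial : ℝ) = (n:ℝ)^n * (An n + Bn n) := by
    rw [gamma_split n hn]
    rw [show exp (n:ℝ) * ((n:ℝ)^n * exp (-(n:ℝ)) * (An n + Bn n))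
      = ((n:ℝ)^n * (An n + Bn n)) * (exp (n:ℝ) * exp (-(n:ℝ))) by ring,
      ← Real.exp_add, add_neg_cancel, Real.exp_zero, mul_one]
  have hT := exp_taylor n hn
  have hfac : ((n.factorial : ℝ)) = (n:ℝ) * ((n-1).factorial : ℝ) := by
    have h := Nat.factorial_succ (n-1)
    rw [Nat.sub_add_cancel hn] at h
    rw [h]
    push_cast [Nat.cast_sub hn]
    ring
  unfold sigmaSzego
  rw [hfac]
  have hSm : ∑ k ∈ Finset.range n, (n:ℝ)^k / (k.factorial : ℝ)
      = exp (n:ℝ) - ((n:ℝ)^n/(((n-1).factorial : ℝ))) * An n := by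
    rw [hT]; ring
  rw [hSm]
  field_simp
  ring_nf
  nlinarith [hG]

lemma xw_continuousOn : ContinuousOn xw (Ioi (0:ℝ)) :=
  fun x hx => (hasDerivAt_xw hx).continuousAt.continuousWithinAt

lemma yw_continuousOn : ContinuousOn yw (Ioi (0:ℝ)) :=
  fun x hx => (hasDerivAt_yw hx).continuousAt.continuousWithinAt

lemma xw_strictMonoOn : StrictMonoOn xw (Ioi (0:ℝ)) := by
  apply strictMonoOn_of_deriv_pos (convex_Ioi 0) xw_continuousOn
  intro x hx
  rw [interior_Ioi] at hx
  rw [(hasDerivAt_xw hx).deriv]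
  exact div_pos (yw_pos hx) (expm1_pos hx)

lemma yw_strictMonoOn : StrictMonoOn yw (Ioi (0:ℝ)) := by
  apply strictMonoOn_of_deriv_pos (convex_Ioi 0) yw_continuousOn
  intro x hx
  rw [interior_Ioi] at hx
  rw [(hasDerivAt_yw hx).deriv]
  exact div_pos (mul_pos (exp_pos x) (xw_pos hx)) (expm1_pos hx)

lemma one_sub_xw_le {w : ℝ} (hw : 1 ≤ w) : 1 - xw w ≤ 12 / w^2 := by
  have hw0 : (0:ℝ) < w := by linarith
  have h1 := expm1_pos hw0
  have hE : (2:ℝ) ≤ exp w := by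
    calc (2:ℝ) ≤ 1 + w := by linarith
    _ ≤ exp w := by linarith [Real.add_one_le_exp w]
  have hc := cube_le_exp (le_of_lt hw0)
  rw [one_sub_xw hw0]
  have h3 : w / (exp w - 1) ≤ w / (w^3/12) := by
    apply div_le_div_of_nonneg_left (le_of_lt hw0) (by positivity)
    nlinarith
  have h4 : w / (w^3/12) = 12 / w^2 := by field_simp
  linarith [h3, h4 ▸ h3]

lemma xw_image : xw '' (Ioi (0:ℝ)) = Ioo (0:ℝ) 1 := by
  apply Subset.antisymm
  · rintro s ⟨w, hw, rfl⟩
    exact ⟨xw_pos hw, xw_lt_one hw⟩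
  · rintro s ⟨hs0, hs1⟩
    set a : ℝ := s/2 with ha_def
    have ha : 0 < a := by simp only [ha_def]; linarith
    have haX : xw a < s := by
      have := xw_le ha
      simp only [ha_def] at this
      linarith
    set b : ℝ := 12/(1-s) + 1 with hb_def
    have hb1 : (1:ℝ) ≤ b := by
      have : (0:ℝ) < 12/(1-s) := div_pos (by norm_num) (by linarith)
      simp only [hb_def]; linarith
    have hb13 : (12:ℝ)/(1-s) < b := by simp only [hb_def]; linarith
    have hbX : s < xw b := by
      have h1 := one_sub_xw_le hb1
      have hb0 : (0:ℝ) < b := by linarith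
      have h2 : 12 / b^2 < 1 - s := by
        rw [div_lt_iff₀ (by positivity)]
        have hb2 : b ≤ b^2 := by nlinarith
        have h3 : 12 < (1-s) * b := by
          have hh := mul_lt_mul_of_pos_right hb13 (show (0:ℝ) < 1-s by linarith)
          rw [div_mul_cancel₀ (12:ℝ) (show (1:ℝ)-s ≠ 0 by linarith)] at hh
          linarith
        nlinarith
      linarith
    have hab : a < b := by
      have : a < 1 := by simp only [ha_def]; linarith
      linarith
    have hIVT := intermediate_value_Icc (le_of_lt hab)
      (xw_continuousOn.mono (fun t ht => lt_of_lt_of_le ha ht.1))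
    obtain ⟨w, hw, hws⟩ := hIVT ⟨le_of_lt haX, le_of_lt hbX⟩
    exact ⟨w, lt_of_lt_of_le ha hw.1, hws⟩

lemma yw_image : yw '' (Ioi (0:ℝ)) = Ioi (0:ℝ) := by
  apply Subset.antisymm
  · rintro s ⟨w, hw, rfl⟩
    exact yw_pos hw
  · intro s hs0
    rw [mem_Ioi] at hs0
    set a : ℝ := s/2 with ha_def
    have ha : 0 < a := by simp only [ha_def]; linarith
    have haY : yw a < s := by
      have := yw_le ha
      simp only [ha_def] at this
      linarith
    set b : ℝ := s + 2 with hb_def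
    have hbY : s < yw b := by
      have := yw_ge (show (0:ℝ) < b by simp only [hb_def]; linarith)
      simp only [hb_def] at this
      linarith
    have hab : a < b := by simp only [ha_def, hb_def]; linarith
    have hIVT := intermediate_value_Icc (le_of_lt hab)
      (yw_continuousOn.mono (fun t ht => lt_of_lt_of_le ha ht.1))
    obtain ⟨w, hw, hws⟩ := hIVT ⟨le_of_lt haY, le_of_lt hbY⟩
    exact ⟨w, lt_of_lt_of_le ha hw.1, hws⟩

lemma exp_nx {n : ℕ} (hn : 1 ≤ n) (x : ℝ) : exp ((n:ℝ)*x) = exp x ^ (n-1) * exp x := by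
  rw [← Real.exp_nat_mul]
  rw [← Real.exp_add]
  congr 1
  have : ((n-1:ℕ):ℝ) = (n:ℝ) - 1 := by push_cast [Nat.cast_sub hn]; ring
  rw [this]; ring

/-- `An` in `w`-coordinates. -/
lemma An_eq (n : ℕ) (hn : 1 ≤ n) :
    An n = ∫ w in Ioi (0:ℝ), (yw w/(exp w - 1)) * (Sw w^(n-1) * exp (xw w)) := by
  have hd : ∀ w ∈ Ioi (0:ℝ), HasDerivWithinAt xw (yw w/(exp w - 1)) (Ioi (0:ℝ)) w :=
    fun w hw => (hasDerivAt_xw hw).hasDerivWithinAt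
  have hinj : InjOn xw (Ioi (0:ℝ)) := xw_strictMonoOn.injOn
  have h := integral_image_eq_integral_abs_deriv_smul measurableSet_Ioi hd hinj
    (fun u => (1-u)^(n-1) * exp ((n:ℝ)*u))
  rw [xw_image] at h
  rw [An, h]
  apply setIntegral_congr_fun measurableSet_Ioi
  intro w hw
  have h1 : |yw w/(exp w - 1)| = yw w/(exp w - 1) :=
    abs_of_pos (div_pos (yw_pos hw) (expm1_pos hw))
  simp only [smul_eq_mul, h1]
  rw [exp_nx hn (xw w), Sw, mul_pow]
  ring

/-- `Bn` in `w`-coordinates. -/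
lemma Bn_eq (n : ℕ) (hn : 1 ≤ n) :
    Bn n = ∫ w in Ioi (0:ℝ), (exp w * xw w/(exp w - 1)) * (Sw w^(n-1) * exp (-(yw w))) := by
  have hd : ∀ w ∈ Ioi (0:ℝ), HasDerivWithinAt yw (exp w * xw w/(exp w - 1)) (Ioi (0:ℝ)) w :=
    fun w hw => (hasDerivAt_yw hw).hasDerivWithinAt
  have hinj : InjOn yw (Ioi (0:ℝ)) := yw_strictMonoOn.injOn
  have h := integral_image_eq_integral_abs_deriv_smul measurableSet_Ioi hd hinj
    (fun u => (1+u)^(n-1) * exp (-((n:ℝ)*u)))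
  rw [yw_image] at h
  rw [Bn, h]
  apply setIntegral_congr_fun measurableSet_Ioi
  intro w hw
  have h1 : |exp w * xw w/(exp w - 1)| = exp w * xw w/(exp w - 1) :=
    abs_of_pos (div_pos (mul_pos (exp_pos w) (xw_pos hw)) (expm1_pos hw))
  simp only [smul_eq_mul, h1]
  have h2 : exp (-((n:ℝ)* yw w)) = exp (-(yw w)) ^ (n-1) * exp (-(yw w)) := by
    have := exp_nx hn (-(yw w))
    rw [← this]
    congr 1
    ring
  rw [h2]
  have h3 : (1 + yw w)^(n-1) * (exp (-(yw w)) ^ (n-1)) = Sw w ^ (n-1) := by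
    rw [← mul_pow, g_yw_eq_Sw hw]
  linear_combination (exp w * xw w / (exp w - 1) * exp (-(yw w))) * h3

lemma Sw_hasDerivWithin : ∀ w ∈ Ioi (0:ℝ), HasDerivWithinAt Sw (-(rho w)) (Ioi (0:ℝ)) w :=
  fun w hw => (hasDerivAt_Sw hw).hasDerivWithinAt

/-- total mass: `∫_{0}^{∞} n S^{n-1} ρ = 1`. -/
lemma mass_eq (n : ℕ) (hn : 1 ≤ n) :
    ∫ w in Ioi (0:ℝ), (n:ℝ) * Sw w^(n-1) * rho w = 1 := by
  have h := integral_image_eq_integral_abs_deriv_smul measurableSet_Ioi Sw_hasDerivWithin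
    Sw_injOn (fun s => (n:ℝ) * s^(n-1))
  rw [Sw_image] at h
  have h1 : ∫ s in Ioo (0:ℝ) 1, (n:ℝ) * s^(n-1) = 1 := by
    rw [← integral_Ioc_eq_integral_Ioo, ← intervalIntegral.integral_of_le zero_le_one]
    rw [intervalIntegral.integral_const_mul, integral_pow]
    have h2 : ((n:ℝ)-1)+1 = (n:ℝ) := by ring
    have h3 : ((n-1:ℕ):ℝ)+1 = (n:ℝ) := by push_cast [Nat.cast_sub hn]; ring
    rw [h3]
    field_simp
    simp
  rw [h1] at h
  have h2 : ∫ w in Ioi (0:ℝ), |(-(rho w))| • ((n:ℝ) * Sw w^(n-1))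
      = ∫ w in Ioi (0:ℝ), (n:ℝ) * Sw w^(n-1) * rho w := by
    apply setIntegral_congr_fun measurableSet_Ioi
    intro w hw
    simp only [smul_eq_mul]
    rw [abs_neg, abs_of_pos (rho_pos hw)]
    ring
  rw [← h2]
  exact h.symm

lemma integrableOn_An_w (n : ℕ) (hn : 1 ≤ n) :
    IntegrableOn (fun w => (yw w/(exp w - 1)) * (Sw w^(n-1) * exp (xw w))) (Ioi (0:ℝ)) := by
  have hd : ∀ w ∈ Ioi (0:ℝ), HasDerivWithinAt xw (yw w/(exp w - 1)) (Ioi (0:ℝ)) w :=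
    fun w hw => (hasDerivAt_xw hw).hasDerivWithinAt
  have hiff := integrableOn_image_iff_integrableOn_abs_deriv_smul measurableSet_Ioi hd
    xw_strictMonoOn.injOn (fun u => (1-u)^(n-1) * exp ((n:ℝ)*u))
  rw [xw_image] at hiff
  have hA : IntegrableOn (fun u : ℝ => (1-u)^(n-1) * exp ((n:ℝ)*u)) (Ioo (0:ℝ) 1) := by
    apply (Continuous.integrableOn_Icc (by continuity)).mono_set Ioo_subset_Icc_self
  have h1 := hiff.mp hA
  apply h1.congr_fun _ measurableSet_Ioi
  intro w hw
  have h2 : |yw w/(exp w - 1)| = yw w/(exp w - 1) :=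
    abs_of_pos (div_pos (yw_pos hw) (expm1_pos hw))
  simp only [smul_eq_mul, h2]
  rw [exp_nx hn (xw w), Sw, mul_pow]
  ring

lemma integrableOn_Bn_w (n : ℕ) (hn : 1 ≤ n) :
    IntegrableOn (fun w => (exp w * xw w/(exp w - 1)) * (Sw w^(n-1) * exp (-(yw w))))
      (Ioi (0:ℝ)) := by
  have hd : ∀ w ∈ Ioi (0:ℝ), HasDerivWithinAt yw (exp w * xw w/(exp w - 1)) (Ioi (0:ℝ)) w :=
    fun w hw => (hasDerivAt_yw hw).hasDerivWithinAt
  have hiff := integrableOn_image_iff_integrableOn_abs_deriv_smul measurableSet_Ioi hd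
    yw_strictMonoOn.injOn (fun u => (1+u)^(n-1) * exp (-((n:ℝ)*u)))
  rw [yw_image] at hiff
  have hB : IntegrableOn (fun u : ℝ => (1+u)^(n-1) * exp (-((n:ℝ)*u))) (Ioi (0:ℝ)) :=
    (integrableOn_Bn_full n hn).mono_set (fun t ht => by
      simp only [mem_Ioi] at ht ⊢; linarith)
  have h1 := hiff.mp hB
  apply h1.congr_fun _ measurableSet_Ioi
  intro w hw
  have h2 : |exp w * xw w/(exp w - 1)| = exp w * xw w/(exp w - 1) :=
    abs_of_pos (div_pos (mul_pos (exp_pos w) (xw_pos hw)) (expm1_pos hw))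
  simp only [smul_eq_mul, h2]
  have h3 : exp (-((n:ℝ)* yw w)) = exp (-(yw w)) ^ (n-1) * exp (-(yw w)) := by
    have := exp_nx hn (-(yw w))
    rw [← this]
    congr 1
    ring
  rw [h3]
  have h4 : (1 + yw w)^(n-1) * (exp (-(yw w)) ^ (n-1)) = Sw w ^ (n-1) := by
    rw [← mul_pow, g_yw_eq_Sw hw]
  linear_combination (exp w * xw w / (exp w - 1) * exp (-(yw w))) * h4

lemma integrableOn_mass (n : ℕ) (hn : 1 ≤ n) :
    IntegrableOn (fun w => (n:ℝ) * Sw w^(n-1) * rho w) (Ioi (0:ℝ)) := by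
  have hiff := integrableOn_image_iff_integrableOn_abs_deriv_smul measurableSet_Ioi
    Sw_hasDerivWithin Sw_injOn (fun s => (n:ℝ) * s^(n-1))
  rw [Sw_image] at hiff
  have hA : IntegrableOn (fun s : ℝ => (n:ℝ) * s^(n-1)) (Ioo (0:ℝ) 1) :=
    (Continuous.integrableOn_Icc (by continuity)).mono_set Ioo_subset_Icc_self
  have h1 := hiff.mp hA
  apply h1.congr_fun _ measurableSet_Ioi
  intro w hw
  simp only [smul_eq_mul]
  rw [abs_neg, abs_of_pos (rho_pos hw)]
  ring

/-- pointwise identity between the `An - Bn` integrand and the `Ψ`-weighted one. -/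
lemma integrand_identity (n : ℕ) (hn : 1 ≤ n) {w : ℝ} (hw : w ∈ Ioi (0:ℝ)) :
    (n:ℝ) * Sw w^(n-1) * rho w * Psi w
      = (n:ℝ)/2 * ((yw w/(exp w - 1)) * (Sw w^(n-1) * exp (xw w))
          - (exp w * xw w/(exp w - 1)) * (Sw w^(n-1) * exp (-(yw w))))
        - 1/3 * ((n:ℝ) * Sw w^(n-1) * rho w) := by
  rw [mem_Ioi] at hw
  have h1 := expm1_pos hw
  have hx := xw_pos hw
  have hy := yw_pos hw
  -- use e^{-y} = e^x * e^{-w} and e^{x} ... the key simplification e^w * e^{-y} = e^x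
  have hxy : exp w * exp (-(yw w)) = exp (xw w) := by
    rw [← Real.exp_add]
    congr 1
    have := xw_add_yw hw
    linarith
  rw [Psi, rho]
  rw [show exp w * xw w / (exp w - 1) * (Sw w ^ (n - 1) * exp (-(yw w)))
    = xw w / (exp w - 1) * (Sw w ^ (n - 1) * (exp w * exp (-(yw w)))) from by ring, hxy]
  field_simp

/-- `σ(n) = ∫_{0}^{∞} n S^{n-1} ρ Ψ`. -/
lemma sigma_J (n : ℕ) (hn : 1 ≤ n) :
    sigmaSzego n = ∫ w in Ioi (0:ℝ), (n:ℝ) * Sw w^(n-1) * rho w * Psi w := by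
  have hint1 := integrableOn_An_w n hn
  have hint2 := integrableOn_Bn_w n hn
  have hint3 := integrableOn_mass n hn
  have step1 : ∫ w in Ioi (0:ℝ), (n:ℝ) * Sw w^(n-1) * rho w * Psi w
      = ∫ w in Ioi (0:ℝ), ((n:ℝ)/2 * ((yw w/(exp w - 1)) * (Sw w^(n-1) * exp (xw w))
          - (exp w * xw w/(exp w - 1)) * (Sw w^(n-1) * exp (-(yw w))))
        - 1/3 * ((n:ℝ) * Sw w^(n-1) * rho w)) :=
    setIntegral_congr_fun measurableSet_Ioi (fun w hw => integrand_identity n hn hw)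
  have hfg : Integrable (fun w => (n:ℝ)/2 * ((yw w/(exp w - 1)) * (Sw w^(n-1) * exp (xw w))
          - (exp w * xw w/(exp w - 1)) * (Sw w^(n-1) * exp (-(yw w)))))
      (MeasureTheory.volume.restrict (Ioi (0:ℝ))) := by
    exact (hint1.sub hint2).const_mul _
  have hg2 : Integrable (fun w => 1/3 * ((n:ℝ) * Sw w^(n-1) * rho w))
      (MeasureTheory.volume.restrict (Ioi (0:ℝ))) := hint3.const_mul _
  rw [sigma_eq n hn, An_eq n hn, Bn_eq n hn, step1]
  rw [integral_sub hfg hg2, integral_const_mul, integral_const_mul]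
  rw [integral_sub hint1 hint2, mass_eq n hn]
  ring

lemma integrableOn_J (n : ℕ) (hn : 1 ≤ n) :
    IntegrableOn (fun w => (n:ℝ) * Sw w^(n-1) * rho w * Psi w) (Ioi (0:ℝ)) := by
  have h : IntegrableOn (fun w => (n:ℝ)/2 * ((yw w/(exp w - 1)) * (Sw w^(n-1) * exp (xw w))
          - (exp w * xw w/(exp w - 1)) * (Sw w^(n-1) * exp (-(yw w))))
        - 1/3 * ((n:ℝ) * Sw w^(n-1) * rho w)) (Ioi (0:ℝ)) := by
    exact (((integrableOn_An_w n hn).sub (integrableOn_Bn_w n hn)).const_mul _).sub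
      ((integrableOn_mass n hn).const_mul _)
  apply h.congr_fun _ measurableSet_Ioi
  intro w hw
  exact (integrand_identity n hn hw).symm

lemma sigma_pos (n : ℕ) (hn : 1 ≤ n) : 0 < sigmaSzego n := by
  rw [sigma_J n hn]
  set f : ℝ → ℝ := fun w => (n:ℝ) * Sw w^(n-1) * rho w * Psi w with hf_def
  have hpos : ∀ w ∈ Ioi (0:ℝ), 0 < f w := by
    intro w hw
    rw [mem_Ioi] at hw
    have h1 : (0:ℝ) < n := by exact_mod_cast hn
    exact mul_pos (mul_pos (mul_pos h1 (pow_pos (Sw_pos hw) _)) (rho_pos hw)) (Psi_pos hw)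
  have hae : 0 ≤ᵐ[MeasureTheory.volume.restrict (Ioi (0:ℝ))] f :=
    (ae_restrict_iff' measurableSet_Ioi).2
      (Filter.Eventually.of_forall (fun w hw => (hpos w hw).le))
  rw [setIntegral_pos_iff_support_of_nonneg_ae hae (integrableOn_J n hn)]
  have hsub : Ioi (0:ℝ) ⊆ Function.support f ∩ Ioi 0 :=
    fun w hw => ⟨ne_of_gt (hpos w hw), hw⟩
  calc (0:ENNReal) < MeasureTheory.volume (Ioi (0:ℝ)) := by
        rw [Real.volume_Ioi]; exact ENNReal.zero_lt_top
    _ ≤ MeasureTheory.volume (Function.support f ∩ Ioi 0) := measure_mono hsub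

noncomputable def kappa (n : ℕ) (t : ℝ) : ℝ := Psi (W (t ^ (1/(n:ℝ))))

lemma rpow_inv_mem {n : ℕ} (hn : 1 ≤ n) {t : ℝ} (ht : t ∈ Ioo (0:ℝ) 1) :
    t ^ (1/(n:ℝ)) ∈ Ioo (0:ℝ) 1 := by
  have hn0 : (0:ℝ) < n := by exact_mod_cast hn
  constructor
  · exact Real.rpow_pos_of_pos ht.1 _
  · exact Real.rpow_lt_one ht.1.le ht.2 (by positivity)

lemma pow_rpow_inv {n : ℕ} (hn : 1 ≤ n) {s : ℝ} (hs : 0 ≤ s) :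
    (s ^ n) ^ (1/(n:ℝ)) = s := by
  have hn0 : (n:ℝ) ≠ 0 := by exact_mod_cast Nat.one_le_iff_ne_zero.mp hn
  rw [← Real.rpow_natCast s n, ← Real.rpow_mul hs]
  rw [show (n:ℝ) * (1/(n:ℝ)) = 1 by field_simp]
  exact Real.rpow_one s

lemma Phi_hasDeriv (n : ℕ) : ∀ w ∈ Ioi (0:ℝ),
    HasDerivWithinAt (fun w => Sw w ^ n) ((n:ℝ) * Sw w^(n-1) * (-(rho w))) (Ioi (0:ℝ)) w :=
  fun w hw => ((hasDerivAt_Sw hw).pow n).hasDerivWithinAt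

lemma Phi_inj (n : ℕ) (hn : 1 ≤ n) : InjOn (fun w => Sw w ^ n) (Ioi (0:ℝ)) := by
  intro a ha b hb hab
  simp only at hab
  apply Sw_injOn ha hb
  have h1 := (Sw_pos ha).le
  have h2 := (Sw_pos hb).le
  exact (pow_left_strictMonoOn₀ (by omega : n ≠ 0)).injOn h1 h2 hab

lemma Phi_image (n : ℕ) (hn : 1 ≤ n) :
    (fun w => Sw w ^ n) '' (Ioi (0:ℝ)) = Ioo (0:ℝ) 1 := by
  apply Subset.antisymm
  · rintro t ⟨w, hw, rfl⟩
    exact ⟨pow_pos (Sw_pos hw) n, pow_lt_one₀ (Sw_pos hw).le (Sw_lt_one hw) (by omega)⟩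
  · intro t ht
    have hs : t ^ (1/(n:ℝ)) ∈ Ioo (0:ℝ) 1 := rpow_inv_mem hn ht
    have : t ^ (1/(n:ℝ)) ∈ Sw '' (Ioi 0) := Sw_image ▸ hs
    obtain ⟨w, hw, hws⟩ := this
    refine ⟨w, hw, ?_⟩
    simp only
    rw [hws]
    have hn0 : (n:ℝ) ≠ 0 := by exact_mod_cast Nat.one_le_iff_ne_zero.mp hn
    rw [← Real.rpow_natCast (t ^ (1/(n:ℝ))) n, ← Real.rpow_mul ht.1.le]
    rw [show (1/(n:ℝ)) * (n:ℝ) = 1 by field_simp]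
    exact Real.rpow_one t

lemma kappa_comp (n : ℕ) (hn : 1 ≤ n) {w : ℝ} (hw : w ∈ Ioi (0:ℝ)) :
    kappa n (Sw w ^ n) = Psi w := by
  rw [kappa, pow_rpow_inv hn (Sw_pos hw).le, W_Sw hw]

lemma sigma_kappa (n : ℕ) (hn : 1 ≤ n) :
    sigmaSzego n = ∫ t in Ioo (0:ℝ) 1, kappa n t := by
  have h := integral_image_eq_integral_abs_deriv_smul measurableSet_Ioi (Phi_hasDeriv n)
    (Phi_inj n hn) (kappa n)
  rw [Phi_image n hn] at h
  rw [h, sigma_J n hn]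
  apply setIntegral_congr_fun measurableSet_Ioi
  intro w hw
  simp only [smul_eq_mul]
  rw [kappa_comp n hn hw]
  rw [abs_of_nonpos (by
    have h1 : (0:ℝ) ≤ (n:ℝ) * Sw w^(n-1) :=
      mul_nonneg (Nat.cast_nonneg n) (pow_nonneg (Sw_pos hw).le _)
    nlinarith [rho_pos hw, h1])]
  ring

lemma integrableOn_kappa (n : ℕ) (hn : 1 ≤ n) :
    IntegrableOn (kappa n) (Ioo (0:ℝ) 1) := by
  have hiff := integrableOn_image_iff_integrableOn_abs_deriv_smul measurableSet_Ioi
    (Phi_hasDeriv n) (Phi_inj n hn) (kappa n)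
  rw [Phi_image n hn] at hiff
  apply hiff.mpr
  apply (integrableOn_J n hn).congr_fun _ measurableSet_Ioi
  intro w hw
  simp only [smul_eq_mul]
  rw [kappa_comp n hn hw]
  rw [abs_of_nonpos (by
    have h1 : (0:ℝ) ≤ (n:ℝ) * Sw w^(n-1) :=
      mul_nonneg (Nat.cast_nonneg n) (pow_nonneg (Sw_pos hw).le _)
    nlinarith [rho_pos hw, h1])]
  ring

lemma kappa_mem (n : ℕ) (hn : 1 ≤ n) {t : ℝ} (ht : t ∈ Ioo (0:ℝ) 1) :
    W (t ^ (1/(n:ℝ))) ∈ Ioi (0:ℝ) := W_mem (rpow_inv_mem hn ht)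

lemma kappa_anti (n : ℕ) (hn : 1 ≤ n) {t : ℝ} (ht : t ∈ Ioo (0:ℝ) 1) :
    kappa (n+1) t < kappa n t := by
  have h1 : t ^ (1/(n:ℝ)) < t ^ (1/((n:ℝ)+1)) := by
    apply Real.rpow_lt_rpow_of_exponent_gt ht.1 ht.2
    have hn0 : (0:ℝ) < n := by exact_mod_cast hn
    rw [div_lt_div_iff₀ (by linarith) hn0]
    linarith
  have hm1 : t ^ (1/(n:ℝ)) ∈ Ioo (0:ℝ) 1 := rpow_inv_mem hn ht
  have hm2 : t ^ (1/((n:ℝ)+1)) ∈ Ioo (0:ℝ) 1 := by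
    have := rpow_inv_mem (show 1 ≤ n+1 by omega) ht
    rwa [show ((n+1:ℕ):ℝ) = (n:ℝ)+1 by push_cast; ring] at this
  have h2 : W (t ^ (1/((n:ℝ)+1))) < W (t ^ (1/(n:ℝ))) := W_strictAnti hm1 hm2 h1
  have h3 := Psi_strictMonoOn (W_mem hm2) (W_mem hm1) h2
  rw [kappa, kappa, show ((n+1:ℕ):ℝ) = (n:ℝ)+1 by push_cast; ring]
  exact h3

lemma sigma_anti (n : ℕ) (hn : 1 ≤ n) : sigmaSzego (n+1) < sigmaSzego n := by
  rw [sigma_kappa n hn, sigma_kappa (n+1) (by omega)]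
  set f : ℝ → ℝ := fun t => kappa n t - kappa (n+1) t with hf_def
  have hint : IntegrableOn f (Ioo (0:ℝ) 1) :=
    (integrableOn_kappa n hn).sub (integrableOn_kappa (n+1) (by omega))
  have hpos : ∀ t ∈ Ioo (0:ℝ) 1, 0 < f t :=
    fun t ht => sub_pos.mpr (kappa_anti n hn ht)
  have hae : 0 ≤ᵐ[MeasureTheory.volume.restrict (Ioo (0:ℝ) 1)] f :=
    (ae_restrict_iff' measurableSet_Ioo).2
      (Filter.Eventually.of_forall (fun t ht => (hpos t ht).le))
  have h1 : 0 < ∫ t in Ioo (0:ℝ) 1, f t := by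
    rw [setIntegral_pos_iff_support_of_nonneg_ae hae hint]
    have hsub : Ioo (0:ℝ) 1 ⊆ Function.support f ∩ Ioo 0 1 :=
      fun t ht => ⟨ne_of_gt (hpos t ht), ht⟩
    calc (0:ENNReal) < MeasureTheory.volume (Ioo (0:ℝ) 1) := by
          rw [Real.volume_Ioo]; norm_num
      _ ≤ MeasureTheory.volume (Function.support f ∩ Ioo 0 1) := measure_mono hsub
  rw [integral_sub (integrableOn_kappa n hn) (integrableOn_kappa (n+1) (by omega))] at h1
  linarith

lemma kappa_le_sixth (n : ℕ) (hn : 1 ≤ n) {t : ℝ} (ht : t ∈ Ioo (0:ℝ) 1) :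
    kappa n t ≤ 1/6 := Psi_le_sixth (mem_Ioi.mp (kappa_mem n hn ht))

lemma sigma_tendsto : Filter.Tendsto sigmaSzego Filter.atTop (nhds 0) := by
  rw [Metric.tendsto_atTop]
  intro ε hε
  set w₀ : ℝ := min 1 (Real.sqrt (ε/2)) with hw₀def
  have hw₀pos : 0 < w₀ := lt_min one_pos (Real.sqrt_pos.2 (by linarith))
  have hw₀le1 : w₀ ≤ 1 := min_le_left _ _
  have hw₀sq : w₀^2 ≤ ε/2 := by
    have h1 : w₀ ≤ Real.sqrt (ε/2) := min_le_right _ _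
    nlinarith [Real.sq_sqrt (show (0:ℝ) ≤ ε/2 by linarith), Real.sqrt_nonneg (ε/2)]
  set s₀ : ℝ := Sw w₀ with hs₀def
  have hs₀ : s₀ ∈ Ioo (0:ℝ) 1 := ⟨Sw_pos hw₀pos, Sw_lt_one hw₀pos⟩
  obtain ⟨N, hN⟩ := (Metric.tendsto_atTop.1
    (tendsto_pow_atTop_nhds_zero_of_lt_one hs₀.1.le hs₀.2)) ε hε
  refine ⟨max N 1, fun n hn => ?_⟩
  have hn1 : 1 ≤ n := le_trans (le_max_right N 1) hn
  have hNn : N ≤ n := le_trans (le_max_left N 1) hn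
  have ha' := hN n hNn
  rw [Real.dist_eq, sub_zero, abs_of_pos (pow_pos hs₀.1 n)] at ha'
  set a : ℝ := s₀ ^ n with ha_def
  have ha0 : 0 < a := pow_pos hs₀.1 n
  have ha1 : a < 1 := pow_lt_one₀ hs₀.1.le hs₀.2 (by omega)
  have hsub1 : Ioc (0:ℝ) a ⊆ Ioo (0:ℝ) 1 :=
    fun t ht => ⟨ht.1, lt_of_le_of_lt ht.2 ha1⟩
  have hsub2 : Ioo a 1 ⊆ Ioo (0:ℝ) 1 := fun t ht => ⟨lt_trans ha0 ht.1, ht.2⟩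
  have hi1 : IntegrableOn (kappa n) (Ioc (0:ℝ) a) :=
    (integrableOn_kappa n hn1).mono_set hsub1
  have hi2 : IntegrableOn (kappa n) (Ioo a 1) :=
    (integrableOn_kappa n hn1).mono_set hsub2
  have hunion : Ioo (0:ℝ) 1 = Ioc 0 a ∪ Ioo a 1 := by
    ext t
    simp only [mem_Ioo, mem_Ioc, mem_union]
    constructor
    · rintro ⟨h1, h2⟩
      rcases le_or_gt t a with h3 | h3
      · exact Or.inl ⟨h1, h3⟩
      · exact Or.inr ⟨h3, h2⟩
    · rintro (⟨h1, h2⟩ | ⟨h1, h2⟩)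
      · exact ⟨h1, lt_of_le_of_lt h2 ha1⟩
      · exact ⟨lt_trans ha0 h1, h2⟩
  have hdisj : Disjoint (Ioc (0:ℝ) a) (Ioo a 1) := by
    rw [Set.disjoint_left]
    intro t h1 h2
    exact absurd h2.1 (not_lt.2 h1.2)
  -- bound on the left piece
  have hIc : IntegrableOn (fun _ : ℝ => (1/6:ℝ)) (Ioc (0:ℝ) a) := integrableOn_const
    (by rw [Real.volume_Ioc]; exact ENNReal.ofReal_ne_top)
  have hb1 : ∫ t in Ioc (0:ℝ) a, kappa n t ≤ a * (1/6) := by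
    have h := setIntegral_mono_on hi1 hIc measurableSet_Ioc
      (fun t ht => kappa_le_sixth n hn1 (hsub1 ht))
    rw [setIntegral_const, Real.volume_real_Ioc_of_le (by linarith),
      smul_eq_mul, sub_zero] at h
    exact h
  -- bound on the right piece
  have hkb : ∀ t ∈ Ioo a 1, kappa n t ≤ ε/3 := by
    intro t ht
    have htI : t ∈ Ioo (0:ℝ) 1 := hsub2 ht
    have hts : s₀ < t ^ (1/(n:ℝ)) := by
      have h5 : a ^ (1/(n:ℝ)) < t ^ (1/(n:ℝ)) :=
        Real.rpow_lt_rpow ha0.le ht.1 (by positivity)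
      rwa [ha_def, pow_rpow_inv hn1 hs₀.1.le] at h5
    have hmem := rpow_inv_mem hn1 htI
    have hvw : W (t ^ (1/(n:ℝ))) < w₀ := by
      have h6 := W_strictAnti hs₀ hmem hts
      rwa [hs₀def, W_Sw (mem_Ioi.mpr hw₀pos)] at h6
    have hv0 : 0 < W (t ^ (1/(n:ℝ))) := mem_Ioi.mp (W_mem hmem)
    have hq := Psi_le_quad hv0 (by linarith)
    rw [kappa]
    nlinarith [hq, hvw, hv0, hw₀sq, hw₀pos]
  have hIc2 : IntegrableOn (fun _ : ℝ => (ε/3:ℝ)) (Ioo a 1) := integrableOn_const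
    (by rw [Real.volume_Ioo]; exact ENNReal.ofReal_ne_top)
  have hb2 : ∫ t in Ioo a 1, kappa n t ≤ ε/3 := by
    have h := setIntegral_mono_on hi2 hIc2 measurableSet_Ioo hkb
    rw [setIntegral_const, Real.volume_real_Ioo_of_le (by linarith),
      smul_eq_mul] at h
    nlinarith [h, hε]
  have htot : sigmaSzego n ≤ a * (1/6) + ε/3 := by
    rw [sigma_kappa n hn1, hunion, setIntegral_union hdisj measurableSet_Ioo hi1 hi2]
    linarith
  have hpos := sigma_pos n hn1
  rw [Real.dist_eq, sub_zero, abs_of_pos hpos]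
  nlinarith [htot, ha', hε]

end Szego

theorem sigma_pos_strict_anti_tendsto_zero :
    (∀ n : ℕ, 1 ≤ n → 0 < sigmaSzego n) ∧
    (∀ n : ℕ, 1 ≤ n → sigmaSzego (n + 1) < sigmaSzego n) ∧
    Filter.Tendsto sigmaSzego Filter.atTop (nhds 0) := by
  exact ⟨fun n hn => Szego.sigma_pos n hn, fun n hn => Szego.sigma_anti n hn,
    Szego.sigma_tendsto⟩
end

section
/- For all integers i ≥ 1 and n ≥ 1, the sums S_i(n) satisfy the recursion S_i(n) = n·Σ_{k=0}^{i-1} C(i-1,k)·S_k(n) − n^i·a_{n-1}(n), where C(i-1,k) denotes the binomial coefficient and a_{n-1}(n) = n^{n-1}/(n-1)!. -/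
/-- `S_i(n) = Σ_{k=0}^{n-1} (n^k/k!)·k^i` (for `i = 0` the `k = 0` term is `0^0 = 1`). -/
noncomputable def S (i n : ℕ) : ℝ :=
  ∑ k ∈ Finset.range n, ((n : ℝ) ^ k / (k.factorial : ℝ)) * (k : ℝ) ^ i

theorem S_recursion (i n : ℕ) (hi : 1 ≤ i) (hn : 1 ≤ n) :
    S i n =
      (n : ℝ) * ∑ k ∈ Finset.range i, ((i - 1).choose k : ℝ) * S k n -
        (n : ℝ) ^ i * ((n : ℝ) ^ (n - 1) / ((n - 1).factorial : ℝ)) := by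
  obtain ⟨j, rfl⟩ := Nat.exists_eq_succ_of_ne_zero (Nat.one_le_iff_ne_zero.mp hi)
  obtain ⟨m, rfl⟩ := Nat.exists_eq_succ_of_ne_zero (Nat.one_le_iff_ne_zero.mp hn)
  simp only [Nat.succ_sub_one]
  have expand : ∀ k : ℕ, ((k : ℝ) + 1) ^ j
      = ∑ t ∈ Finset.range (j + 1), (j.choose t : ℝ) * (k : ℝ) ^ t := by
    intro k
    rw [add_pow]
    exact Finset.sum_congr rfl fun t _ => by rw [one_pow]; ring
  set A : ℕ → ℝ := fun k => ((m : ℝ) + 1) ^ k / (k.factorial : ℝ) with hA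
  have hS : ∀ t, S t (m + 1)
      = (∑ k ∈ Finset.range m, A k * (k : ℝ) ^ t) + A m * (m : ℝ) ^ t := by
    intro t
    rw [S, Finset.sum_range_succ]
    push_cast
    rfl
  have lhs : S (j + 1) (m + 1)
      = ((m : ℝ) + 1) * ∑ k ∈ Finset.range m, A k * ((k : ℝ) + 1) ^ j := by
    rw [S, Finset.sum_range_succ', Finset.mul_sum]
    push_cast
    rw [zero_pow (Nat.succ_ne_zero j), mul_zero, add_zero]
    refine Finset.sum_congr rfl fun k _ => ?_
    have hk : ((k : ℝ) + 1) ≠ 0 := by positivity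
    have hf : ((k + 1).factorial : ℝ) = ((k : ℝ) + 1) * (k.factorial : ℝ) := by
      rw [Nat.factorial_succ]; push_cast; ring
    rw [hA]
    simp only []
    rw [hf]
    have hfk : (k.factorial : ℝ) ≠ 0 := Nat.cast_ne_zero.mpr k.factorial_ne_zero
    field_simp
    ring
  have lhs2 : ∑ k ∈ Finset.range m, A k * ((k : ℝ) + 1) ^ j
      = ∑ t ∈ Finset.range (j + 1), (j.choose t : ℝ)
          * ∑ k ∈ Finset.range m, A k * (k : ℝ) ^ t := by
    simp_rw [expand, Finset.mul_sum]
    rw [Finset.sum_comm]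
    refine Finset.sum_congr rfl fun t _ => ?_
    exact Finset.sum_congr rfl fun k _ => by ring
  have rhs2 : ∑ t ∈ Finset.range (j + 1), (j.choose t : ℝ) * S t (m + 1)
      = (∑ t ∈ Finset.range (j + 1), (j.choose t : ℝ)
          * ∑ k ∈ Finset.range m, A k * (k : ℝ) ^ t)
        + A m * ((m : ℝ) + 1) ^ j := by
    simp_rw [hS, mul_add, Finset.sum_add_distrib]
    congr 1
    rw [expand m, Finset.mul_sum]
    exact Finset.sum_congr rfl fun t _ => by ring
  rw [lhs, lhs2, rhs2]
  simp only [hA, Nat.succ_eq_add_one]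
  push_cast
  ring
end

section
/- For each fixed integer i ≥ 0, S_i(n) = Θ(e^n · n^i) as n → ∞; that is, there exist constants c₁, c₂ > 0 and N such that c₁·e^n·n^i ≤ S_i(n) ≤ c₂·e^n·n^i for all n ≥ N. -/
open Finset

lemma my_factorial_le (n : ℕ) (hn : 1 ≤ n) :
    (n.factorial : ℝ) ≤ Real.exp 1 * Real.sqrt n * ((n : ℝ) / Real.exp 1) ^ n := by
  obtain ⟨m, rfl⟩ := Nat.exists_eq_add_of_le hn
  have h1 : Stirling.stirlingSeq (1 + m) ≤ Stirling.stirlingSeq 1 := by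
    have := Stirling.stirlingSeq'_antitone (Nat.zero_le m)
    simpa [Nat.succ_eq_add_one, Nat.add_comm] using this
  rw [Stirling.stirlingSeq_one] at h1
  set n := 1 + m
  have hden : (0:ℝ) < Real.sqrt (2 * n) * ((n : ℝ) / Real.exp 1) ^ n := by
    have : (0:ℝ) < (n:ℝ) := by positivity
    positivity
  have h2 : (n.factorial : ℝ) = Stirling.stirlingSeq n * (Real.sqrt (2 * n) * ((n : ℝ) / Real.exp 1) ^ n) := by
    rw [Stirling.stirlingSeq]
    field_simp
  rw [h2]
  have h3 : Real.sqrt (2 * n) = Real.sqrt 2 * Real.sqrt n := by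
    rw [← Real.sqrt_mul] <;> norm_num
  calc Stirling.stirlingSeq n * (Real.sqrt (2 * n) * ((n : ℝ) / Real.exp 1) ^ n)
      ≤ (Real.exp 1 / Real.sqrt 2) * (Real.sqrt (2 * n) * ((n : ℝ) / Real.exp 1) ^ n) := by
        apply mul_le_mul_of_nonneg_right h1 hden.le
    _ = Real.exp 1 * Real.sqrt n * ((n : ℝ) / Real.exp 1) ^ n := by
        rw [h3]
        have h2 : Real.sqrt 2 ≠ 0 := by positivity
        field_simp

lemma my_term_lb (n m : ℕ) (hn : 0 < n) (hm : m ≤ n) :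
    ∀ d, d ≤ m → ((n:ℝ)^n / n.factorial) * (((n:ℝ) - m)/n)^d ≤ (n:ℝ)^(n-d) / ((n-d).factorial : ℝ) := by
  intro d
  induction d with
  | zero => simp
  | succ d ih =>
    intro hd
    have hd' : d ≤ m := Nat.le_of_succ_le hd
    have h1 := ih hd'
    have hdn : d + 1 ≤ n := hd.trans hm
    set e := n - (d+1) with he_def
    have he : n - d = e + 1 := by omega
    have hnR : (0:ℝ) < (n:ℝ) := by positivity
    have hmR : (m:ℝ) ≤ n := by exact_mod_cast hm
    have hx0 : (0:ℝ) ≤ ((n:ℝ) - m)/n := by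
      apply div_nonneg _ hnR.le; linarith
    have hnm : (n:ℝ) - m ≤ (e:ℝ) + 1 := by
      have h : n - m ≤ e + 1 := by omega
      have h2 : ((n - m : ℕ) : ℝ) = (n:ℝ) - m := by
        push_cast [hm]; ring
      calc (n:ℝ) - m = ((n - m : ℕ) : ℝ) := h2.symm
        _ ≤ (e:ℝ) + 1 := by exact_mod_cast h
    have hxle : ((n:ℝ) - m)/n ≤ ((e:ℝ) + 1)/n := div_le_div_of_nonneg_right hnm hnR.le
    calc ((n:ℝ)^n / n.factorial) * (((n:ℝ) - m)/n)^(d+1)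
        = (((n:ℝ)^n / n.factorial) * (((n:ℝ) - m)/n)^d) * (((n:ℝ) - m)/n) := by ring
      _ ≤ ((n:ℝ)^(n-d) / ((n-d).factorial : ℝ)) * (((n:ℝ) - m)/n) :=
          mul_le_mul_of_nonneg_right h1 hx0
      _ ≤ ((n:ℝ)^(n-d) / ((n-d).factorial : ℝ)) * (((e:ℝ)+1)/n) := by
          apply mul_le_mul_of_nonneg_left hxle
          positivity
      _ = (n:ℝ)^(n-(d+1)) / (((n-(d+1)).factorial : ℝ)) := by
          rw [he, ← he_def]
          have hfe : (0:ℝ) < (e.factorial : ℝ) := by positivity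
          rw [pow_succ, Nat.factorial_succ]
          push_cast
          field_simp

theorem S_isTheta_exp_mul_pow (i : ℕ) :
    ∃ c₁ c₂ : ℝ, 0 < c₁ ∧ 0 < c₂ ∧ ∃ N : ℕ, ∀ n : ℕ, N ≤ n →
      c₁ * Real.exp n * (n : ℝ) ^ i ≤ S i n ∧ S i n ≤ c₂ * Real.exp n * (n : ℝ) ^ i := by
  refine ⟨3 / (16 * Real.exp 1 * 2 ^ i), 1, by positivity, one_pos, 16, fun n hn => ?_⟩
  have hn0 : 0 < n := by omega
  have hnR : (0:ℝ) < (n:ℝ) := by positivity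
  constructor
  · -- lower bound
    set m := Nat.sqrt n / 2 with hm_def
    have hsq : 4 ≤ Nat.sqrt n := by
      have : 4 * 4 ≤ n := by omega
      exact Nat.le_sqrt.mpr this
    have hsqn : Nat.sqrt n * Nat.sqrt n ≤ n := by
      have := Nat.sqrt_le' n
      nlinarith [this]
    have hmn : m ≤ n := by
      have : Nat.sqrt n ≤ n := Nat.sqrt_le_self n
      omega
    have h2m : 2 * m ≤ Nat.sqrt n := by omega
    have h4m2 : 4 * (m * m) ≤ n := by
      calc 4 * (m * m) = (2*m) * (2*m) := by ring
        _ ≤ Nat.sqrt n * Nat.sqrt n := Nat.mul_le_mul h2m h2m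
        _ ≤ n := hsqn
    have hm2R : (m:ℝ) * m ≤ (n:ℝ) / 4 := by
      have : ((4 * (m * m) : ℕ) : ℝ) ≤ n := by exact_mod_cast h4m2
      push_cast at this
      linarith
    have hmhalf : (m:ℝ) ≤ (n:ℝ) / 2 := by
      have : 2 * m ≤ n := le_trans h2m (Nat.sqrt_le_self n)
      have : ((2 * m : ℕ) : ℝ) ≤ n := by exact_mod_cast this
      push_cast at this
      linarith
    -- √n / 4 ≤ m
    set s := Real.sqrt n with hs_def
    have hss : s * s = n := Real.mul_self_sqrt hnR.le
    have hs0 : 0 ≤ s := Real.sqrt_nonneg _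
    have hs4 : 4 ≤ s := by nlinarith [show (16:ℝ) ≤ n by exact_mod_cast hn]
    have hsqlt : s < (Nat.sqrt n : ℝ) + 1 := by
      have h := Nat.lt_succ_sqrt' n
      have h2 : (n:ℝ) < ((Nat.sqrt n + 1 : ℕ) : ℝ) ^ 2 := by exact_mod_cast h
      push_cast at h2
      nlinarith
    have hms : s / 4 ≤ (m:ℝ) := by
      have h1 : Nat.sqrt n ≤ 2 * m + 1 := by omega
      have h1R : (Nat.sqrt n : ℝ) ≤ 2 * m + 1 := by exact_mod_cast h1
      nlinarith
    -- Bernoulli: 3/4 ≤ x ^ m, x = (n - m)/n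
    set x : ℝ := ((n:ℝ) - m) / n with hx_def
    have hmRn : (m:ℝ) ≤ n := by exact_mod_cast hmn
    have hx0 : 0 ≤ x := by
      apply div_nonneg _ hnR.le; linarith
    have hx1 : x ≤ 1 := by
      rw [div_le_one hnR]
      have : (0:ℝ) ≤ m := by positivity
      linarith
    have hxB : (3/4 : ℝ) ≤ x ^ m := by
      have hB := one_add_mul_le_pow (a := -((m:ℝ)/n)) (by
        have : (m:ℝ)/n ≤ 1 := by rw [div_le_one hnR]; exact hmRn
        linarith) m
      have hx_eq : (1 + -((m:ℝ)/n)) = x := by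
        rw [hx_def]
        field_simp
        ring
      rw [hx_eq] at hB
      have : (m:ℝ) * (m/n) ≤ 1/4 := by
        rw [mul_div_assoc'] at *
        rw [div_le_div_iff₀ hnR (by norm_num)]
        linarith
      calc (3/4:ℝ) ≤ 1 + (m:ℝ) * -((m:ℝ)/n) := by
            have h := this
            rw [mul_neg]
            linarith
        _ ≤ x ^ m := hB
    -- Stirling: exp n / (exp 1 * √n) ≤ n^n / n!
    have hfac : (0:ℝ) < (n.factorial : ℝ) := by positivity
    have hstir : Real.exp n / (Real.exp 1 * s) ≤ (n:ℝ)^n / (n.factorial : ℝ) := by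
      have hf := my_factorial_le n hn0
      rw [div_le_div_iff₀ (by positivity) hfac]
      have hpow : ((n:ℝ) / Real.exp 1) ^ n = (n:ℝ)^n / Real.exp 1 ^ n := div_pow _ _ _
      have hexp : Real.exp 1 ^ n = Real.exp n := Real.exp_one_pow n
      rw [hpow, hexp] at hf
      have hexpn : (0:ℝ) < Real.exp n := Real.exp_pos _
      calc Real.exp n * (n.factorial : ℝ)
          ≤ Real.exp n * (Real.exp 1 * s * ((n:ℝ)^n / Real.exp n)) := by
            apply mul_le_mul_of_nonneg_left hf hexpn.le
        _ = (n:ℝ)^n * (Real.exp 1 * s) := by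
            field_simp
    -- per-term lower bound on Ico (n-m) n
    have hbound : ∀ k ∈ Finset.Ico (n - m) n,
        (3/4 : ℝ) * ((n:ℝ)^n / n.factorial) * ((n:ℝ)/2)^i ≤ ((n : ℝ) ^ k / (k.factorial : ℝ)) * (k : ℝ) ^ i := by
      intro k hk
      rw [Finset.mem_Ico] at hk
      obtain ⟨hk1, hk2⟩ := hk
      set d := n - k with hd_def
      have hdm : d ≤ m := by omega
      have hkd : n - d = k := by omega
      have hterm := my_term_lb n m hn0 hmn d hdm
      rw [hkd] at hterm
      have hxd : x ^ m ≤ x ^ d := pow_le_pow_of_le_one hx0 hx1 hdm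
      have h1 : (3/4 : ℝ) * ((n:ℝ)^n / n.factorial) ≤ (n:ℝ)^k / (k.factorial : ℝ) := by
        calc (3/4 : ℝ) * ((n:ℝ)^n / n.factorial)
            ≤ x ^ d * ((n:ℝ)^n / n.factorial) := by
              apply mul_le_mul_of_nonneg_right (le_trans hxB hxd)
              positivity
          _ = ((n:ℝ)^n / n.factorial) * x ^ d := by ring
          _ ≤ (n:ℝ)^k / (k.factorial : ℝ) := hterm
      have hkhalf : (n:ℝ)/2 ≤ (k:ℝ) := by
        have : ((n - m : ℕ) : ℝ) ≤ k := by exact_mod_cast hk1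
        push_cast [hmn] at this
        linarith
      have h2 : ((n:ℝ)/2)^i ≤ (k:ℝ)^i := by
        apply pow_le_pow_left₀ (by positivity) hkhalf
      calc (3/4 : ℝ) * ((n:ℝ)^n / n.factorial) * ((n:ℝ)/2)^i
          ≤ ((n:ℝ)^k / (k.factorial : ℝ)) * ((n:ℝ)/2)^i := by
            apply mul_le_mul_of_nonneg_right h1 (by positivity)
        _ ≤ ((n:ℝ)^k / (k.factorial : ℝ)) * (k:ℝ)^i := by
            apply mul_le_mul_of_nonneg_left h2 (by positivity)
    have hcard : (Finset.Ico (n - m) n).card = m := by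
      rw [Nat.card_Ico]; omega
    have hsum1 : (m : ℝ) * ((3/4 : ℝ) * ((n:ℝ)^n / n.factorial) * ((n:ℝ)/2)^i)
        ≤ ∑ k ∈ Finset.Ico (n - m) n, ((n : ℝ) ^ k / (k.factorial : ℝ)) * (k : ℝ) ^ i := by
      have := Finset.card_nsmul_le_sum (Finset.Ico (n - m) n)
        (fun k => ((n : ℝ) ^ k / (k.factorial : ℝ)) * (k : ℝ) ^ i)
        ((3/4 : ℝ) * ((n:ℝ)^n / n.factorial) * ((n:ℝ)/2)^i) hbound
      rwa [hcard, nsmul_eq_mul] at this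
    have hsum2 : ∑ k ∈ Finset.Ico (n - m) n, ((n : ℝ) ^ k / (k.factorial : ℝ)) * (k : ℝ) ^ i ≤ S i n := by
      apply Finset.sum_le_sum_of_subset_of_nonneg
      · intro k hk
        rw [Finset.mem_Ico] at hk
        exact Finset.mem_range.mpr hk.2
      · intro k _ _
        positivity
    -- combine
    have hfinal : 3 / (16 * Real.exp 1 * 2 ^ i) * Real.exp n * (n : ℝ) ^ i
        ≤ (m : ℝ) * ((3/4 : ℝ) * ((n:ℝ)^n / n.factorial) * ((n:ℝ)/2)^i) := by
      have hs0' : 0 < s := by linarith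
      have hY0 : (0:ℝ) ≤ (3/4 : ℝ) * (Real.exp n / (Real.exp 1 * s)) * ((n:ℝ)/2)^i := by
        positivity
      have hY : (3/4 : ℝ) * (Real.exp n / (Real.exp 1 * s)) * ((n:ℝ)/2)^i
          ≤ (3/4 : ℝ) * ((n:ℝ)^n / n.factorial) * ((n:ℝ)/2)^i := by
        apply mul_le_mul_of_nonneg_right _ (by positivity)
        apply mul_le_mul_of_nonneg_left hstir (by norm_num)
      have step : (s/4) * ((3/4 : ℝ) * (Real.exp n / (Real.exp 1 * s)) * ((n:ℝ)/2)^i)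
          ≤ (m : ℝ) * ((3/4 : ℝ) * ((n:ℝ)^n / n.factorial) * ((n:ℝ)/2)^i) := by
        calc (s/4) * ((3/4 : ℝ) * (Real.exp n / (Real.exp 1 * s)) * ((n:ℝ)/2)^i)
            ≤ (m : ℝ) * ((3/4 : ℝ) * (Real.exp n / (Real.exp 1 * s)) * ((n:ℝ)/2)^i) :=
              mul_le_mul_of_nonneg_right hms hY0
          _ ≤ (m : ℝ) * ((3/4 : ℝ) * ((n:ℝ)^n / n.factorial) * ((n:ℝ)/2)^i) :=
              mul_le_mul_of_nonneg_left hY (by positivity)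
      refine le_trans (le_of_eq ?_) step
      rw [div_pow]
      have he1 : (0:ℝ) < Real.exp 1 := Real.exp_pos 1
      field_simp
      ring
    linarith
  · -- upper bound
    rw [one_mul, S]
    have h1 : ∀ k ∈ Finset.range n, ((n : ℝ) ^ k / (k.factorial : ℝ)) * (k : ℝ) ^ i
        ≤ ((n : ℝ) ^ k / (k.factorial : ℝ)) * (n : ℝ) ^ i := by
      intro k hk
      rw [Finset.mem_range] at hk
      apply mul_le_mul_of_nonneg_left _ (by positivity)
      apply pow_le_pow_left₀ (by positivity)
      exact_mod_cast hk.le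
    calc ∑ k ∈ Finset.range n, ((n : ℝ) ^ k / (k.factorial : ℝ)) * (k : ℝ) ^ i
        ≤ ∑ k ∈ Finset.range n, ((n : ℝ) ^ k / (k.factorial : ℝ)) * (n : ℝ) ^ i :=
          Finset.sum_le_sum h1
      _ = (∑ k ∈ Finset.range n, (n : ℝ) ^ k / (k.factorial : ℝ)) * (n : ℝ) ^ i := by
          rw [Finset.sum_mul]
      _ ≤ Real.exp n * (n : ℝ) ^ i := by
          apply mul_le_mul_of_nonneg_right _ (by positivity)
          exact Real.sum_le_exp_of_nonneg hnR.le n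
end

section
/- For all integers i ≥ 0 and positive integers n, R_i(n) = (n!/n^{n+1}) · Σ_{l=0}^{i+1} (−1)^l · C(i+1,l) · n^{i+1−l} · S_l(n). -/
/-- `p_k(n) = n!·k/((n−k)!·n^(k+1))`. -/
noncomputable def p (n k : ℕ) : ℝ :=
  (n.factorial : ℝ) * k / (((n - k).factorial : ℝ) * (n : ℝ) ^ (k + 1))

/-- `R_i(n) = Σ_{k=1}^{n} p_k(n)·k^i`. -/
noncomputable def R (i n : ℕ) : ℝ := ∑ k ∈ Finset.Icc 1 n, p n k * (k : ℝ) ^ i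

theorem R_eq_alternating_sum_S (i n : ℕ) (hn : 1 ≤ n) :
    R i n = ((n.factorial : ℝ) / (n : ℝ) ^ (n + 1)) *
      ∑ l ∈ Finset.range (i + 2),
        (-1 : ℝ) ^ l * ((i + 1).choose l : ℝ) * (n : ℝ) ^ (i + 1 - l) * S l n := by
  have hn0 : (n : ℝ) ≠ 0 := by positivity
  -- Step 1: reindex the sum defining R via k = n - j.
  have step1 : R i n = ((n.factorial : ℝ) / (n : ℝ) ^ (n + 1)) *
      ∑ j ∈ Finset.range n, ((n : ℝ) ^ j / (j.factorial : ℝ)) * ((n : ℝ) - j) ^ (i + 1) := by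
    rw [R, Finset.mul_sum]
    refine Finset.sum_nbij' (fun k => n - k) (fun j => n - j) ?_ ?_ ?_ ?_ ?_
    · intro k hk
      simp only [Finset.mem_Icc] at hk
      simp only [Finset.mem_range]
      omega
    · intro j hj
      simp only [Finset.mem_range] at hj
      simp only [Finset.mem_Icc]
      omega
    · intro k hk
      simp only [Finset.mem_Icc] at hk
      show n - (n - k) = k
      omega
    · intro j hj
      simp only [Finset.mem_range] at hj
      show n - (n - j) = j
      omega
    · intro k hk
      simp only [Finset.mem_Icc] at hk
      have hkn : k ≤ n := hk.2
      have h2 : ((n : ℝ) - ((n - k : ℕ) : ℝ)) = (k : ℝ) := by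
        rw [Nat.cast_sub hkn]; ring
      show p n k * (k : ℝ) ^ i = ((n.factorial : ℝ) / (n : ℝ) ^ (n + 1)) *
        ((n : ℝ) ^ (n - k) / ((n - k).factorial : ℝ) * ((n : ℝ) - ((n - k : ℕ) : ℝ)) ^ (i + 1))
      rw [p, h2]
      have h3 : (n : ℝ) ^ (n + 1) = (n : ℝ) ^ (k + 1) * (n : ℝ) ^ (n - k) := by
        rw [← pow_add]; congr 1; omega
      rw [h3, pow_succ (k : ℝ) i]
      have hfac : ((n - k).factorial : ℝ) ≠ 0 := Nat.cast_ne_zero.mpr (Nat.factorial_ne_zero _)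
      field_simp
  rw [step1]
  congr 1
  -- Step 2: binomial expansion and swapping the sums.
  have sub_pow' : ∀ (x y : ℝ) (m : ℕ), (x - y) ^ m =
      ∑ l ∈ Finset.range (m + 1), (-1 : ℝ) ^ l * (m.choose l : ℝ) * x ^ (m - l) * y ^ l := by
    intro x y m
    rw [sub_eq_add_neg, add_comm, add_pow]
    refine Finset.sum_congr rfl fun l hl => ?_
    rw [neg_pow]; ring
  calc ∑ j ∈ Finset.range n, ((n : ℝ) ^ j / (j.factorial : ℝ)) * ((n : ℝ) - j) ^ (i + 1)
      = ∑ j ∈ Finset.range n, ∑ l ∈ Finset.range (i + 2),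
          (-1 : ℝ) ^ l * ((i + 1).choose l : ℝ) * (n : ℝ) ^ (i + 1 - l) *
            (((n : ℝ) ^ j / (j.factorial : ℝ)) * (j : ℝ) ^ l) := by
        refine Finset.sum_congr rfl fun j hj => ?_
        rw [sub_pow' (n : ℝ) (j : ℝ) (i + 1), Finset.mul_sum]
        refine Finset.sum_congr rfl fun l hl => ?_
        ring
    _ = ∑ l ∈ Finset.range (i + 2),
          (-1 : ℝ) ^ l * ((i + 1).choose l : ℝ) * (n : ℝ) ^ (i + 1 - l) * S l n := by
        rw [Finset.sum_comm]
        refine Finset.sum_congr rfl fun l hl => ?_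
        rw [S, Finset.mul_sum]
end

section
/- For every positive integer n, Σ_{k=1}^{n} n!·k/((n−k)!·n^{k+1}) = 1; that is, the probabilities p_k(n), 1 ≤ k ≤ n, sum to 1 (equivalently R_0(n) = 1). -/
theorem sum_p_eq_one (n : ℕ) (hn : 1 ≤ n) :
    ∑ k ∈ Finset.Icc 1 n,
        (n.factorial : ℝ) * k / (((n - k).factorial : ℝ) * (n : ℝ) ^ (k + 1)) = 1 := by
  have hn0 : (n : ℝ) ≠ 0 := Nat.cast_ne_zero.mpr (by omega)
  set f : ℕ → ℝ := fun k =>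
    if k ≤ n then (n.factorial : ℝ) / (((n - k).factorial : ℝ) * (n : ℝ) ^ k) else 0 with hf
  have hsum : ∑ k ∈ Finset.Icc 1 n,
      (n.factorial : ℝ) * k / (((n - k).factorial : ℝ) * (n : ℝ) ^ (k + 1))
      = ∑ k ∈ Finset.Icc 1 n, (f k - f (k + 1)) := by
    apply Finset.sum_congr rfl
    intro k hk
    simp only [Finset.mem_Icc] at hk
    obtain ⟨hk1, hk2⟩ := hk
    rcases eq_or_lt_of_le hk2 with h | h
    · simp only [hf, if_pos hk2, if_neg (show ¬ k + 1 ≤ n by omega), sub_zero, h,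
        Nat.sub_self, Nat.factorial_zero, Nat.cast_one, one_mul, le_refl, if_true,
        (show ¬ n + 1 ≤ n by omega), if_false]
      rw [pow_succ]
      field_simp
    · have h1 : k ≤ n := le_of_lt h
      have h2 : k + 1 ≤ n := h
      simp only [hf, if_pos h1, if_pos h2]
      have hfac : ((n - k).factorial : ℝ) = ((n - k : ℕ) : ℝ) * ((n - (k + 1)).factorial : ℝ) := by
        have e : n - k = (n - (k + 1)) + 1 := by omega
        rw [e, Nat.factorial_succ]
        push_cast
        ring
      have hnk : ((n - k : ℕ) : ℝ) = (n : ℝ) - (k : ℝ) := by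
        push_cast [Nat.cast_sub h1]; ring
      have hnk0 : ((n - k : ℕ) : ℝ) ≠ 0 := by
        rw [hnk]
        have : (k : ℝ) < (n : ℝ) := by exact_mod_cast h
        linarith
      have hfac1 : ((n - k).factorial : ℝ) ≠ 0 := Nat.cast_ne_zero.mpr (Nat.factorial_ne_zero _)
      have hfac2 : ((n - (k + 1)).factorial : ℝ) ≠ 0 :=
        Nat.cast_ne_zero.mpr (Nat.factorial_ne_zero _)
      have hnk0' : (n : ℝ) - (k : ℝ) ≠ 0 := by rw [← hnk]; exact hnk0
      rw [hfac, hnk]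
      field_simp
      ring
  rw [hsum]
  have htel : ∀ m : ℕ, ∑ k ∈ Finset.Icc 1 m, (f k - f (k + 1)) = f 1 - f (m + 1) := by
    intro m
    induction m with
    | zero => simp
    | succ m ih =>
      rw [Finset.sum_Icc_succ_top (by omega), ih]
      ring
  rw [htel]
  have h1 : f 1 = 1 := by
    simp only [hf, if_pos hn]
    have e : n = (n - 1) + 1 := by omega
    rw [show n.factorial = n * (n - 1).factorial by rw [e, Nat.factorial_succ]; congr 1 <;> omega]
    have : ((n - 1).factorial : ℝ) ≠ 0 := Nat.cast_ne_zero.mpr (Nat.factorial_ne_zero _)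
    push_cast
    field_simp
  have h2 : f (n + 1) = 0 := by
    simp only [hf, if_neg (by omega : ¬ n + 1 ≤ n)]
  rw [h1, h2, sub_zero]
end

section
/- Let m ≥ 2 be an integer and n = m². Then (m/(2n)) · Σ_{k=1}^{n} (k!/n^k) · Σ_{i=0}^{k} C(m,i)·C(n−m,k−i)·i·(i+1) = (2m + 1 + R_1(n))/(2m + 2). -/
open Finset

/- ### Auxiliary natural-number lemmas (weighted Vandermonde) -/

lemma vand_range (a b c : ℕ) :
    (a+b).choose c = ∑ j ∈ range (c+1), a.choose j * b.choose (c-j) := by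
  rw [Nat.add_choose_eq, Finset.Nat.sum_antidiagonal_eq_sum_range_succ_mk]

lemma mul_choose_shift (M j : ℕ) : M.choose (j+1) * (j+1) = M * (M-1).choose j := by
  cases M with
  | zero => simp
  | succ m => rw [← Nat.add_one_mul_choose_eq]; simp

lemma V1 (M N k : ℕ) (hk : 1 ≤ k) :
    ∑ i ∈ range (k+1), M.choose i * N.choose (k-i) * i
      = M * (M-1+N).choose (k-1) := by
  obtain ⟨k, rfl⟩ := Nat.exists_eq_add_of_le' hk
  rw [Finset.sum_range_succ']
  simp only [Nat.mul_zero, Nat.add_zero, Nat.add_sub_cancel]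
  have : ∀ j, M.choose (j+1) * N.choose (k+1-(j+1)) * (j+1)
      = M * ((M-1).choose j * N.choose (k-j)) := by
    intro j
    have h1 : k+1-(j+1) = k - j := by omega
    rw [h1, mul_right_comm, mul_choose_shift]; ring
  rw [Finset.sum_congr rfl (fun j _ => this j), ← Finset.mul_sum,
    vand_range (M-1) N k]

lemma V2 (M N k : ℕ) (hk : 2 ≤ k) :
    ∑ i ∈ range (k+1), M.choose i * N.choose (k-i) * (i*(i-1))
      = M * (M-1) * (M-2+N).choose (k-2) := by
  obtain ⟨k, rfl⟩ := Nat.exists_eq_add_of_le' hk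
  rw [show k+2+1 = (k+1)+1+1 from rfl, Finset.sum_range_succ',
    Finset.sum_range_succ']
  simp only [Nat.mul_zero, Nat.zero_mul, Nat.add_zero, Nat.mul_one, Nat.add_sub_cancel]
  have : ∀ j, M.choose (j+1+1) * N.choose (k+2-(j+1+1)) * ((j+1+1)*(j+1))
      = M * (M-1) * ((M-2).choose j * N.choose (k-j)) := by
    intro j
    have h1 : k+2-(j+1+1) = k - j := by omega
    have h3 : M.choose (j+2) * ((j+2)*(j+1)) = M * (M-1) * (M-2).choose j := by
      rw [← Nat.mul_assoc, mul_choose_shift, Nat.mul_assoc, mul_choose_shift]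
      have h4 : M - 1 - 1 = M - 2 := by omega
      rw [h4]; ring
    rw [h1]
    calc M.choose (j+1+1) * N.choose (k-j) * ((j+1+1)*(j+1))
        = M.choose (j+2) * ((j+2)*(j+1)) * N.choose (k-j) := by ring
      _ = M * (M-1) * ((M-2).choose j * N.choose (k-j)) := by rw [h3]; ring
  rw [Finset.sum_congr rfl (fun j _ => this j), ← Finset.mul_sum,
    vand_range (M-2) N k]

lemma inner_eq (M N k : ℕ) (hk : 1 ≤ k) :
    ∑ i ∈ range (k+1), M.choose i * N.choose (k-i) * (i*(i+1))
      = (if 2 ≤ k then M*(M-1)*((M-2+N).choose (k-2)) else 0)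
        + 2*(M*((M-1+N).choose (k-1))) := by
  have hsplit : ∀ i : ℕ, i*(i+1) = i*(i-1) + 2*i := by
    intro i
    cases i with
    | zero => rfl
    | succ j => simp only [Nat.succ_sub_one]; ring
  have e1 : ∑ i ∈ range (k+1), M.choose i * N.choose (k-i) * (2*i)
      = 2*(M*((M-1+N).choose (k-1))) := by
    rw [← V1 M N k hk, Finset.mul_sum]
    exact Finset.sum_congr rfl (fun i _ => by ring)
  have e2 : ∑ i ∈ range (k+1), M.choose i * N.choose (k-i) * (i*(i-1))
      = (if 2 ≤ k then M*(M-1)*((M-2+N).choose (k-2)) else 0) := by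
    by_cases h2 : 2 ≤ k
    · rw [if_pos h2, V2 M N k h2]
    · have hk1 : k = 1 := by omega
      subst hk1
      rw [if_neg h2]
      simp [Finset.sum_range_succ]
  simp only [hsplit, Nat.mul_add, Finset.sum_add_distrib, e1, e2]

/- ### The sequence `aa n k = n!/((n-k)!·n^k)` and its properties -/

noncomputable def aa (n k : ℕ) : ℝ := (n.factorial : ℝ) / (((n-k).factorial : ℝ) * (n:ℝ)^k)

lemma aa_one (n : ℕ) (hn : 1 ≤ n) : aa n 1 = 1 := by
  have h : (n:ℝ) * ((n-1).factorial : ℝ) = (n.factorial : ℝ) := by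
    exact_mod_cast congrArg (Nat.cast : ℕ → ℝ) (Nat.mul_factorial_pred (by omega))
  have h1 : ((n-1).factorial : ℝ) ≠ 0 := Nat.cast_ne_zero.mpr (Nat.factorial_ne_zero _)
  have h2 : (n:ℝ) ≠ 0 := Nat.cast_ne_zero.mpr (by omega)
  rw [aa, pow_one, ← h]
  field_simp

lemma aa_step (n k : ℕ) (hk : k < n) :
    (k:ℝ) * aa n k = (n:ℝ) * (aa n k - aa n (k+1)) := by
  have hfact : ((n-k).factorial : ℝ) = ((n:ℝ) - (k:ℝ)) * ((n-(k+1)).factorial : ℝ) := by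
    have : (n-k) = (n-(k+1)) + 1 := by omega
    rw [this, Nat.factorial_succ]
    push_cast
    have : ((n - (k+1) : ℕ) : ℝ) = (n:ℝ) - (k:ℝ) - 1 := by
      push_cast [Nat.cast_sub (show k+1 ≤ n by omega)]
      ring
    rw [this]; ring
  have h1 : ((n-(k+1)).factorial : ℝ) ≠ 0 := Nat.cast_ne_zero.mpr (Nat.factorial_ne_zero _)
  have h2 : (n:ℝ) ≠ 0 := Nat.cast_ne_zero.mpr (by omega)
  have h3 : (n:ℝ)^k ≠ 0 := pow_ne_zero _ h2
  rw [aa, aa, hfact, pow_succ]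
  have h4 : (n:ℝ) - (k:ℝ) ≠ 0 := by
    have : (k:ℝ) < (n:ℝ) := by exact_mod_cast hk
    linarith
  field_simp
  ring

lemma T1 (n : ℕ) (hn : 1 ≤ n) : ∑ k ∈ Icc 1 n, (k:ℝ) * aa n k = n := by
  have hn' : n - 1 + 1 = n := by omega
  have htop := Finset.sum_Icc_succ_top (a := 1) (b := n-1)
    (f := fun k => (k:ℝ) * aa n k) (by omega)
  rw [hn'] at htop
  have htel : ∑ k ∈ Icc 1 (n-1), (k:ℝ) * aa n k = (n:ℝ) * (aa n 1 - aa n n) := by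
    calc ∑ k ∈ Icc 1 (n-1), (k:ℝ) * aa n k
        = ∑ k ∈ Icc 1 (n-1), (n:ℝ) * (aa n k - aa n (k+1)) := by
          refine Finset.sum_congr rfl (fun k hk => ?_)
          rw [Finset.mem_Icc] at hk
          exact aa_step n k (by omega)
      _ = (n:ℝ) * ∑ k ∈ Icc 1 (n-1), (aa n k - aa n (k+1)) := by rw [Finset.mul_sum]
      _ = (n:ℝ) * (aa n 1 - aa n n) := by
          congr 1
          rw [← Finset.Ico_add_one_right_eq_Icc, Finset.sum_Ico_eq_sum_range]
          have h5 : n - 1 + 1 - 1 = n - 1 := by omega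
          rw [h5]
          rw [Finset.sum_congr rfl (fun i (_ : i ∈ range (n-1)) =>
            show aa n (1+i) - aa n (1+i+1) = aa n (i+1) - aa n (i+1+1) by
              rw [Nat.add_comm 1 i])]
          have h6 := Finset.sum_range_sub' (f := fun i => aa n (i+1)) (n := n-1)
          rw [h6, show (0:ℕ)+1 = 1 by rfl, show n-1+1 = n by omega]
  rw [htop, htel, aa_one n hn]
  ring

/- ### Factorial/binomial conversion lemmas -/

lemma F1nat (n k : ℕ) (h1 : 1 ≤ k) (h2 : k ≤ n) :
    k.factorial * ((n-1).choose (k-1)) * (n-k).factorial = k * (n-1).factorial := by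
  obtain ⟨j, rfl⟩ := Nat.exists_eq_add_of_le' h1
  have hc := Nat.choose_mul_factorial_mul_factorial (show j ≤ n-1 by omega)
  have h3 : (n-1)-j = n-(j+1) := by omega
  rw [h3] at hc
  have h4 : j+1-1 = j := by omega
  rw [h4, Nat.factorial_succ]
  calc (j+1) * j.factorial * (n-1).choose j * (n-(j+1)).factorial
      = (j+1) * ((n-1).choose j * j.factorial * (n-(j+1)).factorial) := by ring
    _ = (j+1) * (n-1).factorial := by rw [hc]

lemma F2nat (n k : ℕ) (h1 : 2 ≤ k) (h2 : k ≤ n) :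
    k.factorial * ((n-2).choose (k-2)) * (n-k).factorial = k*(k-1) * (n-2).factorial := by
  obtain ⟨j, rfl⟩ := Nat.exists_eq_add_of_le' h1
  have hc := Nat.choose_mul_factorial_mul_factorial (show j ≤ n-2 by omega)
  have h3 : (n-2)-j = n-(j+2) := by omega
  rw [h3] at hc
  have h4 : j+2-2 = j := by omega
  have h5 : j+2-1 = j+1 := by omega
  rw [h4, h5, show (j+2).factorial = (j+2)*(j+1)*j.factorial from by
    rw [show j+2 = (j+1)+1 from rfl, Nat.factorial_succ, Nat.factorial_succ]; ring]
  calc (j+2)*(j+1) * j.factorial * (n-2).choose j * (n-(j+2)).factorial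
      = (j+2)*(j+1) * ((n-2).choose j * j.factorial * (n-(j+2)).factorial) := by ring
    _ = (j+2)*(j+1) * (n-2).factorial := by rw [hc]

lemma F1R (n k : ℕ) (h1 : 1 ≤ k) (h2 : k ≤ n) :
    (k.factorial:ℝ)/(n:ℝ)^k * ((n-1).choose (k-1) : ℝ)
      = (k:ℝ) * aa n k / (n:ℝ) := by
  have hn1 : 1 ≤ n := le_trans h1 h2
  have hnat : (k.factorial:ℝ) * ((n-1).choose (k-1):ℝ) * ((n-k).factorial:ℝ)
      = (k:ℝ) * ((n-1).factorial:ℝ) := by exact_mod_cast F1nat n k h1 h2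
  have hfac : (n:ℝ) * ((n-1).factorial : ℝ) = (n.factorial : ℝ) := by
    exact_mod_cast congrArg (Nat.cast : ℕ → ℝ) (Nat.mul_factorial_pred (by omega))
  have e1 : ((n-k).factorial : ℝ) ≠ 0 := Nat.cast_ne_zero.mpr (Nat.factorial_ne_zero _)
  have e2 : (n:ℝ) ≠ 0 := Nat.cast_ne_zero.mpr (by omega)
  have e3 : (n:ℝ)^k ≠ 0 := pow_ne_zero _ e2
  rw [aa]
  field_simp
  linear_combination (n:ℝ) * hnat + (k:ℝ) * hfac

lemma F2R (n k : ℕ) (h1 : 2 ≤ k) (h2 : k ≤ n) :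
    (k.factorial:ℝ)/(n:ℝ)^k * ((n-2).choose (k-2) : ℝ)
      = (k:ℝ)*((k:ℝ)-1) * aa n k / ((n:ℝ)*((n:ℝ)-1)) := by
  have hn2 : 2 ≤ n := le_trans h1 h2
  have hnat : (k.factorial:ℝ) * ((n-2).choose (k-2):ℝ) * ((n-k).factorial:ℝ)
      = (k:ℝ)*((k:ℝ)-1) * ((n-2).factorial:ℝ) := by
    have := F2nat n k h1 h2
    have hc : ((k.factorial * ((n-2).choose (k-2)) * (n-k).factorial : ℕ):ℝ)
        = ((k*(k-1) * (n-2).factorial : ℕ):ℝ) := by exact_mod_cast congrArg (Nat.cast : ℕ → ℝ) this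
    push_cast [Nat.cast_sub (show 1 ≤ k by omega)] at hc
    convert hc using 2
  have hfac : (n:ℝ) * ((n:ℝ)-1) * ((n-2).factorial : ℝ) = (n.factorial : ℝ) := by
    have e1 : (n-1) * (n-2).factorial = (n-1).factorial := by
      have : n - 2 = (n-1) - 1 := by omega
      rw [this]
      exact Nat.mul_factorial_pred (by omega)
    have e2 : n * (n-1).factorial = n.factorial := Nat.mul_factorial_pred (by omega)
    have : ((n * ((n-1) * (n-2).factorial) : ℕ) : ℝ) = (n.factorial : ℝ) := by
      rw [e1]; exact_mod_cast congrArg (Nat.cast : ℕ → ℝ) e2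
    push_cast [Nat.cast_sub (show 1 ≤ n by omega)] at this
    linear_combination this
  have e1 : ((n-k).factorial : ℝ) ≠ 0 := Nat.cast_ne_zero.mpr (Nat.factorial_ne_zero _)
  have e2 : (n:ℝ) ≠ 0 := Nat.cast_ne_zero.mpr (by omega)
  have e3 : (n:ℝ)^k ≠ 0 := pow_ne_zero _ e2
  have e4 : (n:ℝ) - 1 ≠ 0 := by
    have : (2:ℝ) ≤ (n:ℝ) := by exact_mod_cast hn2
    linarith
  rw [aa]
  field_simp
  linear_combination ((n:ℝ)*((n:ℝ)-1)) * hnat + ((k:ℝ)*((k:ℝ)-1)) * hfac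

/-- `R_1(n) = Σ_{k=1}^{n} n!·k²/((n−k)!·n^(k+1))`. -/
noncomputable def R1 (n : ℕ) : ℝ :=
  ∑ k ∈ Finset.Icc 1 n,
    (n.factorial : ℝ) * (k : ℝ) ^ 2 / (((n - k).factorial : ℝ) * (n : ℝ) ^ (k + 1))

lemma R1_eq (n : ℕ) (hn : 1 ≤ n) :
    ∑ k ∈ Icc 1 n, (k:ℝ)*((k:ℝ)-1) * aa n k
      = (n:ℝ) * R1 n - ∑ k ∈ Icc 1 n, (k:ℝ) * aa n k := by
  have h1 : (n:ℝ) * R1 n = ∑ k ∈ Icc 1 n, (k:ℝ)^2 * aa n k := by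
    rw [R1, Finset.mul_sum]
    refine Finset.sum_congr rfl (fun k hk => ?_)
    rw [aa, pow_succ]
    have e1 : ((n-k).factorial : ℝ) ≠ 0 := Nat.cast_ne_zero.mpr (Nat.factorial_ne_zero _)
    have e2 : (n:ℝ) ≠ 0 := Nat.cast_ne_zero.mpr (by omega)
    have e3 : (n:ℝ)^k ≠ 0 := pow_ne_zero _ e2
    field_simp
    ring
  rw [h1, ← Finset.sum_sub_distrib]
  exact Finset.sum_congr rfl (fun k _ => by ring)

theorem bucket_expected_value_formula (m n : ℕ) (hm : 2 ≤ m) (hn : n = m ^ 2) :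
    ((m : ℝ) / (2 * (n : ℝ))) *
        ∑ k ∈ Finset.Icc 1 n, ((k.factorial : ℝ) / (n : ℝ) ^ k) *
          ∑ i ∈ Finset.range (k + 1),
            (m.choose i : ℝ) * ((n - m).choose (k - i) : ℝ) * (i : ℝ) * ((i : ℝ) + 1)
      = (2 * (m : ℝ) + 1 + R1 n) / (2 * (m : ℝ) + 2) := by
  have hmn : m ≤ n := hn ▸ Nat.le_self_pow two_ne_zero m
  have hn4 : 4 ≤ n := by
    have := Nat.pow_le_pow_left hm 2
    omega
  have hn1 : 1 ≤ n := by omega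
  have en : (n:ℝ) ≠ 0 := Nat.cast_ne_zero.mpr (by omega)
  have en1 : (n:ℝ) - 1 ≠ 0 := by
    have : (4:ℝ) ≤ (n:ℝ) := by exact_mod_cast hn4
    linarith
  -- per-term identity
  have hterm : ∀ k ∈ Icc 1 n,
      ((k.factorial : ℝ) / (n : ℝ) ^ k) *
          ∑ i ∈ Finset.range (k + 1),
            (m.choose i : ℝ) * ((n - m).choose (k - i) : ℝ) * (i : ℝ) * ((i : ℝ) + 1)
      = (if 2 ≤ k then
            ((m:ℝ)*((m:ℝ)-1)/((n:ℝ)*((n:ℝ)-1))) * ((k:ℝ)*((k:ℝ)-1) * aa n k)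
          else 0)
        + (2*(m:ℝ)/(n:ℝ)) * ((k:ℝ) * aa n k) := by
    intro k hk
    rw [Finset.mem_Icc] at hk
    obtain ⟨hk1, hkn⟩ := hk
    have hcast : (∑ i ∈ Finset.range (k + 1),
          (m.choose i : ℝ) * ((n - m).choose (k - i) : ℝ) * (i : ℝ) * ((i : ℝ) + 1))
        = ((∑ i ∈ range (k+1), m.choose i * (n-m).choose (k-i) * (i*(i+1)) : ℕ) : ℝ) := by
      push_cast
      exact Finset.sum_congr rfl (fun i _ => by ring)
    rw [hcast, inner_eq m (n-m) k hk1,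
      show m-1+(n-m) = n-1 by omega, show m-2+(n-m) = n-2 by omega]
    push_cast [apply_ite (Nat.cast : ℕ → ℝ), Nat.cast_sub (show 1 ≤ m by omega)]
    by_cases h2 : 2 ≤ k
    · rw [if_pos h2, if_pos h2]
      linear_combination ((m:ℝ)*((m:ℝ)-1)) * (F2R n k h2 hkn) + (2*(m:ℝ)) * (F1R n k hk1 hkn)
    · rw [if_neg h2, if_neg h2]
      linear_combination (2*(m:ℝ)) * (F1R n k hk1 hkn)
  rw [Finset.sum_congr rfl hterm, Finset.sum_add_distrib, ← Finset.sum_filter,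
    show (Icc 1 n).filter (fun k => 2 ≤ k) = Icc 2 n from by
      ext x; simp only [Finset.mem_filter, Finset.mem_Icc]; omega,
    ← Finset.mul_sum, ← Finset.mul_sum]
  have hsub : ∑ k ∈ Icc 2 n, (k:ℝ)*((k:ℝ)-1) * aa n k
      = ∑ k ∈ Icc 1 n, (k:ℝ)*((k:ℝ)-1) * aa n k := by
    refine Finset.sum_subset (Finset.Icc_subset_Icc_left (by omega)) (fun x hx hx' => ?_)
    rw [Finset.mem_Icc] at hx
    rw [Finset.mem_Icc] at hx'
    have : x = 1 := by omega
    subst this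
    norm_num
  rw [hsub, R1_eq n hn1, T1 n hn1]
  have hx : (2:ℝ) ≤ (m:ℝ) := by exact_mod_cast hm
  have hnn : (n:ℝ) = (m:ℝ)^2 := by rw [hn]; push_cast; ring
  rw [hnn]
  set x : ℝ := (m:ℝ)
  have h0 : x ≠ 0 := by linarith
  have h1 : x^2 - 1 ≠ 0 := by nlinarith
  have h2 : x + 1 ≠ 0 := by linarith
  have h3 : x^2 ≠ 0 := by positivity
  field_simp
  ring
end
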